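/- arXiv:2309.09491 — 13 statements merged into one kernel-verified Lean document; each statement's English description precedes it below -/
import Mathlib

section
/- Let p be an odd prime. Then (2^(p-1) - 1)/p ≡ (1/2) · ∑_{j=0}^{p-2} 1/binomial(p-2, j) (mod p). -/
open Finset

lemma den_div_cast_dvd (c : ℤ) (d : ℕ) : ((c : ℚ) / (d : ℚ)).den ∣ d := by
  have h : (c : ℚ) / (d : ℚ) = Rat.divInt c d := by
    rw [Rat.divInt_eq_div]; norm_cast
  rw [h]
  exact_mod_cast Rat.den_dvd c d

lemma den_div_nat (c d : ℕ) : ((c : ℚ) / (d : ℚ)).den ∣ d := by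
  have := den_div_cast_dvd (c : ℤ) d
  push_cast at this
  exact this

lemma choose_p1 {p : ℕ} (hp : p.Prime) : ∀ k, k ≤ p - 1 →
    (((p-1).choose k : ℕ) : ZMod p) = (-1)^k := by
  intro k
  induction k with
  | zero => intro _; simp
  | succ k ih =>
    intro hk
    have hk' : k ≤ p - 1 := by omega
    have hpascal : p.choose (k+1) = (p-1).choose k + (p-1).choose (k+1) := by
      conv_lhs => rw [← Nat.succ_pred_eq_of_pos hp.pos]
      exact Nat.choose_succ_succ _ _
    have hdvd : p ∣ p.choose (k+1) :=
      Nat.Prime.dvd_choose_self hp (Nat.succ_ne_zero k) (by have := hp.pos; omega)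
    have h0 : ((p.choose (k+1) : ℕ) : ZMod p) = 0 :=
      (ZMod.natCast_eq_zero_iff _ _).mpr hdvd
    rw [hpascal] at h0
    push_cast at h0
    rw [ih hk'] at h0
    have : (((p-1).choose (k+1) : ℕ) : ZMod p) = -(-1)^k := by
      linear_combination h0
    rw [this, pow_succ]; ring

lemma choose_p2 {p : ℕ} (hp : p.Prime) (hp3 : 3 ≤ p) : ∀ k, k ≤ p - 2 →
    (((p-2).choose k : ℕ) : ZMod p) = (-1)^k * (k+1) := by
  intro k
  induction k with
  | zero => intro _; simp
  | succ k ih =>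
    intro hk
    have hk' : k ≤ p - 2 := by omega
    have hpascal : (p-1).choose (k+1) = (p-2).choose k + (p-2).choose (k+1) := by
      have h : p - 1 = (p-2) + 1 := by omega
      rw [h]
      exact Nat.choose_succ_succ _ _
    have h1 : (((p-1).choose (k+1) : ℕ) : ZMod p) = (-1)^(k+1) :=
      choose_p1 hp (k+1) (by omega)
    rw [hpascal] at h1
    push_cast at h1
    rw [ih hk'] at h1
    have : (((p-2).choose (k+1) : ℕ) : ZMod p) = (-1)^(k+1) - (-1)^k * (k+1) := by
      linear_combination h1
    rw [this, pow_succ]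
    push_cast
    ring

lemma sum_good {p : ℕ} [hpf : Fact p.Prime] {s : Finset ℕ} {f : ℕ → ℚ}
    (h : ∀ k ∈ s, ¬ p ∣ (f k).den ∧ ((f k : ℚ) : ZMod p) = 0) :
    ¬ p ∣ (∑ k ∈ s, f k).den ∧ ((∑ k ∈ s, f k : ℚ) : ZMod p) = 0 := by
  classical
  have hp := hpf.out
  induction s using Finset.cons_induction with
  | empty => simp [hp.one_lt.ne']
  | cons a s ha ih =>
    rw [Finset.sum_cons]
    obtain ⟨hda, hca⟩ := h a (Finset.mem_cons_self a s)
    obtain ⟨hds, hcs⟩ := ih (fun k hk => h k (Finset.mem_cons_of_mem hk))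
    have hdvd := Rat.add_den_dvd (f a) (∑ k ∈ s, f k)
    have hden : ¬ p ∣ (f a + ∑ k ∈ s, f k).den := by
      intro hc
      rcases (Nat.Prime.dvd_mul hp).mp (hc.trans hdvd) with h' | h'
      exacts [hda h', hds h']
    refine ⟨hden, ?_⟩
    have h1 : ((f a).den : ZMod p) ≠ 0 := fun hc =>
      hda ((ZMod.natCast_eq_zero_iff _ _).mp hc)
    have h2 : (((∑ k ∈ s, f k).den : ℕ) : ZMod p) ≠ 0 := fun hc =>
      hds ((ZMod.natCast_eq_zero_iff _ _).mp hc)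
    rw [Rat.cast_add_of_ne_zero h1 h2, hca, hcs, add_zero]

/-- Rational congruence: `x ≡ y (mod m)` means that `x - y`, written in lowest
terms, has numerator divisible by `m`. -/
def ratModEq (m : ℕ) (x y : ℚ) : Prop := (m : ℤ) ∣ (x - y).num

theorem fermat_quotient_inverse_binomial_sum (p : ℕ) (hp : p.Prime) (hodd : Odd p) :
    ratModEq p ((2 ^ (p - 1) - 1 : ℚ) / p)
      ((1 / 2) * ∑ j ∈ Finset.range (p - 1), (1 : ℚ) / ((p - 2).choose j)) := by
  haveI : Fact p.Prime := ⟨hp⟩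
  have hp3 : 3 ≤ p := by
    have h2 := hp.two_le
    have hodd' := Nat.odd_iff.mp hodd
    omega
  have hp0 : (p : ℚ) ≠ 0 := Nat.cast_ne_zero.mpr hp.pos.ne'
  -- exact identity for the left side
  have hterm : ∀ k, ((p-1).choose k : ℚ) / ((k+1 : ℕ) : ℚ)
      = (p.choose (k+1) : ℚ) / (p : ℚ) := by
    intro k
    rw [div_eq_div_iff (by positivity) hp0]
    have h := Nat.add_one_mul_choose_eq (p-1) k
    have hsp : p - 1 + 1 = p := by omega
    rw [hsp] at h
    have h' : ((p * (p-1).choose k : ℕ) : ℚ) = ((p.choose (k+1) * (k+1) : ℕ) : ℚ) := by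
      exact_mod_cast congrArg (Nat.cast : ℕ → ℚ) h
    push_cast at h'
    push_cast
    linear_combination h'
  have hnat : (∑ k ∈ Finset.range (p-1), p.choose (k+1)) + 2 = 2^p := by
    have h1 := Nat.sum_range_choose p
    rw [Finset.sum_range_succ, Nat.choose_self] at h1
    have h2 := Finset.sum_range_succ' (p.choose) (p-1)
    rw [show p - 1 + 1 = p by omega] at h2
    rw [h2, Nat.choose_zero_right] at h1
    omega
  have hsum : ∑ k ∈ Finset.range (p-1), ((p-1).choose k : ℚ) / ((k+1 : ℕ) : ℚ)
      = (2^p - 2)/p := by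
    rw [Finset.sum_congr rfl (fun k _ => hterm k), ← Finset.sum_div]
    congr 1
    have := congrArg (Nat.cast : ℕ → ℚ) hnat
    push_cast at this
    linarith
  have hpow : (2:ℚ)^p = 2^(p-1) * 2 := by
    conv_lhs => rw [show p = (p-1)+1 by omega]
    rw [pow_succ]
  have hx : (2 ^ (p - 1) - 1 : ℚ) / p
      = (1/2) * ∑ k ∈ Finset.range (p-1), ((p-1).choose k : ℚ) / ((k+1 : ℕ) : ℚ) := by
    rw [hsum]
    field_simp
    linear_combination (-1:ℚ) * hpow
  unfold ratModEq
  rw [hx, ← mul_sub, ← Finset.sum_sub_distrib]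
  set f : ℕ → ℚ := fun k =>
    ((p-1).choose k : ℚ) / ((k+1 : ℕ) : ℚ) - (1:ℚ) / ((p - 2).choose k : ℚ) with hf
  have hgood : ∀ k ∈ Finset.range (p-1), ¬ p ∣ (f k).den ∧ ((f k : ℚ) : ZMod p) = 0 := by
    intro k hk
    rw [Finset.mem_range] at hk
    have hk2 : k ≤ p - 2 := by omega
    have hC1 := choose_p1 hp k (by omega)
    have hC2 := choose_p2 hp hp3 k hk2
    have hk1nd : ¬ p ∣ (k+1) := by
      intro h
      have := Nat.le_of_dvd (Nat.succ_pos k) h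
      omega
    have hk1ne : ((k+1 : ℕ) : ZMod p) ≠ 0 := fun hc =>
      hk1nd ((ZMod.natCast_eq_zero_iff _ _).mp hc)
    have hene : ((-1 : ZMod p))^k ≠ 0 := by
      apply pow_ne_zero
      simp only [ne_eq, neg_eq_zero]
      exact one_ne_zero
    have hC2ne : (((p-2).choose k : ℕ) : ZMod p) ≠ 0 := by
      rw [hC2]
      push_cast
      exact mul_ne_zero hene (by exact_mod_cast hk1ne)
    have hC2nd : ¬ p ∣ (p-2).choose k := fun h =>
      hC2ne ((ZMod.natCast_eq_zero_iff _ _).mpr h)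
    -- denominators
    have hda : (((p-1).choose k : ℚ) / ((k+1 : ℕ) : ℚ)).den ∣ (k+1) := den_div_nat _ _
    have hdb : ((1:ℚ) / ((p - 2).choose k : ℚ)).den ∣ (p-2).choose k := by
      have := den_div_nat 1 ((p-2).choose k)
      simpa using this
    constructor
    · intro hc
      simp only [hf, sub_eq_add_neg] at hc
      have hdvd := Rat.add_den_dvd (((p-1).choose k : ℚ) / ((k+1 : ℕ) : ℚ))
        (-((1:ℚ) / ((p - 2).choose k : ℚ)))
      rw [Rat.den_neg_eq_den] at hdvd
      rcases (Nat.Prime.dvd_mul hp).mp (hc.trans hdvd) with h' | h'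
      · exact hk1nd (h'.trans hda)
      · exact hC2nd (h'.trans hdb)
    · have h1 : ((((p-1).choose k : ℚ) / ((k+1 : ℕ) : ℚ)).den : ZMod p) ≠ 0 := by
        intro hc
        have := (ZMod.natCast_eq_zero_iff _ _).mp hc
        exact hk1nd (this.trans hda)
      have h2 : (((1:ℚ) / ((p - 2).choose k : ℚ)).den : ZMod p) ≠ 0 := by
        intro hc
        have := (ZMod.natCast_eq_zero_iff _ _).mp hc
        exact hC2nd (this.trans hdb)
      have hnuma : (((((k+1 : ℕ) : ℚ)).num : ℤ) : ZMod p) ≠ 0 := by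
        rw [Rat.num_natCast]
        exact_mod_cast hk1ne
      have hnumb : ((((((p-2).choose k : ℕ) : ℚ)).num : ℤ) : ZMod p) ≠ 0 := by
        rw [Rat.num_natCast]
        exact_mod_cast hC2ne
      simp only [hf]
      rw [Rat.cast_sub_of_ne_zero h1 h2]
      rw [Rat.cast_div_of_ne_zero (by simp) hnuma,
          Rat.cast_div_of_ne_zero (by simp) hnumb]
      rw [Rat.cast_natCast, Rat.cast_natCast, Rat.cast_natCast, Rat.cast_one]
      rw [hC1, hC2]
      push_cast
      have he : ((-1 : ZMod p))^k * (-1)^k = 1 := by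
        rw [← mul_pow]; norm_num
      have hKne : ((k : ZMod p) + 1) ≠ 0 := by
        have h' := hk1ne; push_cast at h'; exact h'
      rw [div_sub_div _ _ hKne (mul_ne_zero hene hKne), div_eq_zero_iff]
      left
      linear_combination (((k : ZMod p))+1) * he
  obtain ⟨hd, hc⟩ := sum_good hgood
  set S := ∑ k ∈ Finset.range (p-1), f k with hS
  have hhalf : ((1:ℚ)/2).den ∣ 2 := by simpa using den_div_nat 1 2
  have hp2 : ¬ (p ∣ 2) := by
    intro h
    have := Nat.le_of_dvd (by norm_num) h
    omega
  have hdenD : ¬ p ∣ ((1/2) * S : ℚ).den := by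
    intro hcd
    have hdvd := Rat.mul_den_dvd (1/2 : ℚ) S
    have : p ∣ ((1:ℚ)/2).den * S.den := hcd.trans hdvd
    rcases (Nat.Prime.dvd_mul hp).mp this with h' | h'
    · exact hp2 (h'.trans hhalf)
    · exact hd h'
  have hcastD : (((1/2) * S : ℚ) : ZMod p) = 0 := by
    have h1 : (((1:ℚ)/2).den : ZMod p) ≠ 0 := by
      intro hcc
      exact hp2 (((ZMod.natCast_eq_zero_iff _ _).mp hcc).trans hhalf)
    have h2 : ((S.den : ℕ) : ZMod p) ≠ 0 := fun hcc =>
      hd ((ZMod.natCast_eq_zero_iff _ _).mp hcc)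
    rw [Rat.cast_mul_of_ne_zero h1 h2, hc, mul_zero]
  -- conclude
  rw [Rat.cast_def] at hcastD
  have hdne : ((((1/2) * S : ℚ).den : ℕ) : ZMod p) ≠ 0 := fun hcc =>
    hdenD ((ZMod.natCast_eq_zero_iff _ _).mp hcc)
  have hnum : ((((1/2) * S : ℚ).num : ℤ) : ZMod p) = 0 := by
    rcases div_eq_zero_iff.mp hcastD with h | h
    · exact h
    · exact absurd h hdne
  exact (ZMod.intCast_zmod_eq_zero_iff_dvd _ _).mp hnum
end

section
/- Let p be an odd prime and n ≥ 2 an integer. Then (n^p - n)/p ≡ -∑_{r=1}^{p-1} (1^r + 2^r + ⋯ + n^r)/r (mod p). -/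
open Finset

lemma choose_congr (p : ℕ) (hp : p.Prime) : ∀ k : ℕ, k ≤ p - 1 →
    (p:ℤ) ∣ ((p-1).choose k : ℤ) - (-1)^k := by
  intro k
  induction k with
  | zero => simp
  | succ k ih =>
    intro hk
    have hk' : k ≤ p - 1 := le_of_lt (Nat.lt_of_succ_le hk)
    have h1 : (p:ℤ) ∣ (p.choose (k+1) : ℤ) := by
      exact_mod_cast Int.natCast_dvd_natCast.mpr
        (hp.dvd_choose_self (Nat.succ_ne_zero k) (by omega))
    have h2 : (p.choose (k+1) : ℤ) = ((p-1).choose k : ℤ) + ((p-1).choose (k+1) : ℤ) := by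
      have hp1 : p = p - 1 + 1 := (Nat.succ_pred_eq_of_pos hp.pos).symm
      rw [hp1]
      exact_mod_cast Nat.choose_succ_succ (p-1) k
    have := dvd_sub h1 (ih hk')
    rw [h2] at this
    have h3 : ((p-1).choose k : ℤ) + ((p-1).choose (k+1) : ℤ) - (((p-1).choose k :ℤ) - (-1)^k)
        = ((p-1).choose (k+1) : ℤ) - (-1)^(k+1) := by ring
    rwa [h3] at this

lemma ratmod_aux (p : ℕ) (hp : p.Prime) (x : ℚ) (b : ℕ) (hb : ¬ (p:ℤ) ∣ (b:ℤ)) (N : ℤ)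
    (h : x * b = (p:ℚ) * N) : (p:ℤ) ∣ x.num := by
  have hden : (x.den : ℚ) ≠ 0 := by
    exact_mod_cast x.den_nz
  have hq : (x.num : ℚ) * b = (p:ℚ) * N * x.den := by
    rw [← Rat.num_div_den x] at h
    field_simp at h
    linarith [h]
  have hz : x.num * b = (p:ℤ) * N * x.den := by exact_mod_cast hq
  have hdvd : (p:ℤ) ∣ x.num * b := ⟨N * x.den, by linarith [hz]⟩
  have hprime : Prime (p:ℤ) := Nat.prime_iff_prime_int.mp hp
  rcases hprime.dvd_mul.mp hdvd with h1 | h1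
  · exact h1
  · exact absurd h1 hb

lemma pow_sub_pow_odd (p : ℕ) (hodd : Odd p) (x : ℚ) :
    x^p - (x-1)^p = ∑ m ∈ Finset.range p, (-1)^m * (p.choose m : ℚ) * x^m := by
  have hexp : (x - 1)^p = ∑ m ∈ Finset.range (p+1), x^m * (-1:ℚ)^(p-m) * (p.choose m) := by
    rw [sub_eq_add_neg]
    simpa using add_pow x (-1:ℚ) p
  rw [hexp, Finset.sum_range_succ]
  simp only [Nat.sub_self, pow_zero, Nat.choose_self, Nat.cast_one, mul_one]
  rw [Finset.sum_congr rfl (g := fun m => -((-1)^m * (p.choose m : ℚ) * x^m)) ?_]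
  · rw [Finset.sum_neg_distrib]; ring
  · intro m hm
    have hmle : m ≤ p := le_of_lt (Finset.mem_range.mp hm)
    have h1 : (-1:ℚ)^(p-m) * (-1)^m = (-1)^p := by rw [← pow_add, Nat.sub_add_cancel hmle]
    have h2 : (-1:ℚ)^p = -1 := Odd.neg_one_pow hodd
    have hsq : ((-1:ℚ)^m) * ((-1)^m) = 1 := by
      rw [← pow_add]; exact Even.neg_one_pow ⟨m, rfl⟩
    have h3 : (-1:ℚ)^(p-m) = -(-1)^m := by
      calc (-1:ℚ)^(p-m) = (-1)^(p-m) * ((-1)^m * (-1)^m) := by rw [hsq, mul_one]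
        _ = ((-1)^(p-m) * (-1)^m) * (-1)^m := by ring
        _ = -(-1)^m := by rw [h1, h2]; ring
    rw [h3]; ring

lemma key_identity (p n : ℕ) (hp : p.Prime) (hodd : Odd p) :
    (n:ℚ)^p - n = ∑ r ∈ Finset.Icc 1 (p-1),
      (-1)^r * (p.choose r : ℚ) * ∑ i ∈ Finset.Icc 1 n, (i:ℚ)^r := by
  have htel : ∑ j ∈ Finset.range n, (((j+1:ℕ):ℚ)^p - ((j:ℕ):ℚ)^p) = (n:ℚ)^p := by
    rw [Finset.sum_range_sub (fun j => ((j:ℕ):ℚ)^p) n]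
    simp [hp.ne_zero]
  have hsum : ∀ m : ℕ, ∑ j ∈ Finset.range n, ((j+1:ℕ):ℚ)^m = ∑ i ∈ Finset.Icc 1 n, (i:ℚ)^m := by
    intro m
    rw [← Finset.Ico_add_one_right_eq_Icc, Finset.sum_Ico_eq_sum_range]
    simp [add_comm]
  have hexp : (n:ℚ)^p = ∑ m ∈ Finset.range p,
      (-1)^m * (p.choose m : ℚ) * ∑ i ∈ Finset.Icc 1 n, (i:ℚ)^m := by
    rw [← htel]
    rw [Finset.sum_congr rfl (g := fun j => ∑ m ∈ Finset.range p,
        (-1)^m * (p.choose m : ℚ) * ((j+1:ℕ):ℚ)^m) ?_]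
    · rw [Finset.sum_comm]
      refine Finset.sum_congr rfl fun m _ => ?_
      rw [← Finset.mul_sum, hsum]
    · intro j _
      have := pow_sub_pow_odd p hodd ((j+1:ℕ):ℚ)
      push_cast at this ⊢
      rw [← this]; ring_nf
  have hsplit : ∑ m ∈ Finset.range p, (-1)^m * (p.choose m : ℚ) * ∑ i ∈ Finset.Icc 1 n, (i:ℚ)^m
      = (n:ℚ) + ∑ r ∈ Finset.Icc 1 (p-1),
        (-1)^r * (p.choose r : ℚ) * ∑ i ∈ Finset.Icc 1 n, (i:ℚ)^r := by
    rw [Finset.range_eq_Ico, Finset.sum_eq_sum_Ico_succ_bot hp.pos]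
    have h0 : ((-1:ℚ))^0 * (p.choose 0 : ℚ) * ∑ i ∈ Finset.Icc 1 n, (i:ℚ)^0 = n := by
      simp
    rw [h0]
    congr 1
  rw [hexp, hsplit]; ring

theorem fermat_quotient_power_sum (p n : ℕ) (hp : p.Prime) (hodd : Odd p) (hn : 2 ≤ n) :
    ratModEq p (((n : ℚ) ^ p - n) / p)
      (- ∑ r ∈ Finset.Icc 1 (p - 1), (∑ i ∈ Finset.Icc 1 n, (i : ℚ) ^ r) / r) := by
  classical
  set F : ℕ := (p-1).factorial with hF
  set a : ℕ → ℤ := fun r => (-1)^r * ((p-1).choose (r-1) : ℤ) + 1 with ha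
  set c : ℕ → ℤ := fun r => a r / p with hc
  have hpz : (p:ℚ) ≠ 0 := by exact_mod_cast hp.ne_zero
  have hpa : ∀ r ∈ Finset.Icc 1 (p-1), (p:ℤ) ∣ a r := by
    intro r hr
    rw [Finset.mem_Icc] at hr
    have hd := choose_congr p hp (r-1) (by omega)
    have hsign : (-1:ℤ)^r * (-1)^(r-1) = -1 := by
      rw [← pow_add]
      exact Odd.neg_one_pow ⟨r-1, by omega⟩
    have hrw : a r = (-1)^r * (((p-1).choose (r-1) : ℤ) - (-1)^(r-1)) := by
      rw [ha]
      simp only []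
      linear_combination hsign
    rw [hrw]
    exact Dvd.dvd.mul_left hd _
  have hpc : ∀ r ∈ Finset.Icc 1 (p-1), (p:ℤ) * c r = a r := fun r hr =>
    Int.mul_ediv_cancel' (hpa r hr)
  set N : ℤ := ∑ r ∈ Finset.Icc 1 (p-1), c r * ((F / r : ℕ) : ℤ) * ∑ i ∈ Finset.Icc 1 n, (i:ℤ)^r with hN
  have hxy : ((((n : ℚ) ^ p - n) / p) -
      (- ∑ r ∈ Finset.Icc 1 (p - 1), (∑ i ∈ Finset.Icc 1 n, (i : ℚ) ^ r) / r)) * F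
      = (p:ℚ) * N := by
    rw [key_identity p n hp hodd]
    rw [hN]
    push_cast
    rw [Finset.mul_sum, sub_neg_eq_add, Finset.sum_div, ← Finset.sum_add_distrib, Finset.sum_mul]
    refine Finset.sum_congr rfl fun r hr => ?_
    rw [Finset.mem_Icc] at hr
    obtain ⟨hr1, hr2⟩ := hr
    have hrz : (r:ℚ) ≠ 0 := by
      have : r ≠ 0 := by omega
      exact_mod_cast this
    have hrdF : r ∣ F := Nat.dvd_factorial (by omega) hr2
    have hFr : (((F:ℤ)/(r:ℤ) : ℤ):ℚ) = (F:ℚ)/(r:ℚ) := by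
      rw [Int.cast_div_charZero (Int.natCast_dvd_natCast.mpr hrdF)]
      push_cast
      ring
    have hcomb : (p:ℚ) * ((p-1).choose (r-1) : ℚ) = (p.choose r:ℚ) * r := by
      have h := Nat.add_one_mul_choose_eq (p-1) (r-1)
      have h1 : (p-1).succ = p := Nat.succ_pred_eq_of_pos hp.pos
      have h2 : (r-1)+1 = r := by omega
      rw [show p - 1 + 1 = p from h1] at h
      rw [h2] at h
      exact_mod_cast h
    have hcq : (p:ℚ) * (c r : ℚ) = ((-1:ℚ)^r * ((p-1).choose (r-1) : ℚ) + 1) := by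
      have h := hpc r (Finset.mem_Icc.mpr ⟨hr1, hr2⟩)
      have hq : (((p:ℤ) * c r : ℤ) : ℚ) = ((a r : ℤ) : ℚ) := by exact_mod_cast h
      rw [ha] at hq
      push_cast at hq
      convert hq using 2
    have hFq : (F:ℚ) ≠ 0 := by
      have : F ≠ 0 := Nat.factorial_ne_zero _
      exact_mod_cast this
    have e1 : (p.choose r : ℚ) = (p:ℚ) * ((p-1).choose (r-1):ℚ) / r := by
      field_simp
      linarith [hcomb]
    have e2 : ((c r : ℤ):ℚ) = ((-1:ℚ)^r * ((p-1).choose (r-1):ℚ) + 1)/p := by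
      field_simp
      linarith [hcq]
    rw [hFr, e1, e2]
    field_simp
  have hFnd : ¬ (p:ℤ) ∣ (F:ℤ) := by
    rw [Int.natCast_dvd_natCast, hF, hp.dvd_factorial]
    have := hp.two_le
    omega
  exact ratmod_aux p hp _ F hFnd N hxy
end

section
/- Let p be an odd prime and n ≥ 2 an integer. Then (n^p - n)/p ≡ -∑_{r=1}^{p-1} (-1)^r · (1^r + 2^r + ⋯ + (n-1)^r)/r (mod p). -/
private lemma sum_Icc_one (m : ℕ) (f : ℕ → ℚ) :
    ∑ i ∈ Finset.Icc 1 m, f i = ∑ i ∈ Finset.range m, f (i + 1) := by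
  induction m with
  | zero => simp
  | succ m ih => rw [Finset.sum_Icc_succ_top (by omega), ih, Finset.sum_range_succ]

private lemma prime_int {p : ℕ} (hp : p.Prime) : Prime (p : ℤ) :=
  Int.prime_iff_natAbs_prime.mpr (by simpa using hp)

private lemma num_div_dvd {p : ℕ} (hp : p.Prime) {a b : ℤ} (ha : (p : ℤ) ∣ a)
    (hb : ¬ (p : ℤ) ∣ b) : (p : ℤ) ∣ ((a : ℚ) / (b : ℚ)).num := by
  have hb0 : b ≠ 0 := by rintro rfl; exact hb (dvd_zero _)
  have hb0' : (b : ℚ) ≠ 0 := Int.cast_ne_zero.mpr hb0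
  set q : ℚ := (a : ℚ) / (b : ℚ) with hq
  have hden : (q.den : ℚ) ≠ 0 := Nat.cast_ne_zero.mpr q.den_nz
  have h1 : (q.num : ℚ) / (q.den : ℚ) = (a : ℚ) / (b : ℚ) := by rw [Rat.num_div_den]
  have key : (q.num : ℚ) * b = a * q.den := by
    field_simp at h1
    linarith [h1]
  have keyZ : q.num * b = a * (q.den : ℤ) := by exact_mod_cast key
  have hdvd : (p : ℤ) ∣ q.num * b := by rw [keyZ]; exact ha.mul_right _
  rcases (prime_int hp).dvd_mul.mp hdvd with h | h
  · exact h
  · exact absurd h hb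

private lemma not_dvd_den {p : ℕ} (hp : p.Prime) {x : ℚ} (h : (p : ℤ) ∣ x.num) :
    ¬ (p : ℤ) ∣ (x.den : ℤ) := by
  intro hd
  have h1 : p ∣ x.num.natAbs := by
    have := Int.natAbs_dvd_natAbs.mpr h
    simpa using this
  have h2 : p ∣ x.den := Int.ofNat_dvd.mp hd
  have := Nat.dvd_gcd h1 h2
  rw [x.reduced] at this
  exact absurd (Nat.dvd_one.mp this) hp.one_lt.ne'

private lemma num_add_dvd {p : ℕ} (hp : p.Prime) {x y : ℚ}
    (hx : (p : ℤ) ∣ x.num) (hy : (p : ℤ) ∣ y.num) : (p : ℤ) ∣ (x + y).num := by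
  have hx' := not_dvd_den hp hx
  have hy' := not_dvd_den hp hy
  have d1 : (x.den : ℚ) ≠ 0 := Nat.cast_ne_zero.mpr x.den_nz
  have d2 : (y.den : ℚ) ≠ 0 := Nat.cast_ne_zero.mpr y.den_nz
  have hxy : x + y =
      ((x.num * y.den + y.num * x.den : ℤ) : ℚ) / ((x.den * y.den : ℤ) : ℚ) := by
    conv_lhs => rw [← Rat.num_div_den x, ← Rat.num_div_den y]
    push_cast
    field_simp
  rw [hxy]
  refine num_div_dvd hp (dvd_add (hx.mul_right _) (hy.mul_right _)) ?_
  intro hd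
  rcases (Nat.Prime.dvd_mul hp).mp (Int.ofNat_dvd.mp hd) with h | h
  · exact hx' (Int.ofNat_dvd.mpr h)
  · exact hy' (Int.ofNat_dvd.mpr h)

private lemma num_sum_dvd {p : ℕ} (hp : p.Prime) {ι : Type*} {s : Finset ι} {f : ι → ℚ}
    (h : ∀ i ∈ s, (p : ℤ) ∣ (f i).num) : (p : ℤ) ∣ (∑ i ∈ s, f i).num := by
  induction s using Finset.cons_induction with
  | empty => simp
  | cons a s ha ih =>
    rw [Finset.sum_cons]
    exact num_add_dvd hp (h a (Finset.mem_cons_self _ _))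
      (ih fun i hi => h i (Finset.mem_cons.mpr (Or.inr hi)))

private lemma choose_cong {p : ℕ} (hp : p.Prime) :
    ∀ k, k ≤ p - 1 → (p : ℤ) ∣ ((p - 1).choose k : ℤ) - (-1) ^ k := by
  have hp1 : p - 1 + 1 = p := Nat.succ_pred_eq_of_pos hp.pos
  intro k
  induction k with
  | zero => simp
  | succ k ih =>
    intro hk
    have ihk := ih (by omega)
    have h1 : (p : ℤ) ∣ (p.choose (k + 1) : ℤ) :=
      Int.natCast_dvd_natCast.mpr (hp.dvd_choose_self (Nat.succ_ne_zero k) (by omega))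
    have h2 : p.choose (k + 1) = (p - 1).choose k + (p - 1).choose (k + 1) := by
      conv_lhs => rw [← hp1]
      exact Nat.choose_succ_succ _ _
    have key : ((p - 1).choose (k + 1) : ℤ) - (-1) ^ (k + 1) =
        (p.choose (k + 1) : ℤ) - (((p - 1).choose k : ℤ) - (-1) ^ k) := by
      rw [h2]; push_cast; ring
    rw [key]
    exact dvd_sub h1 ihk

theorem fermat_quotient_alternating_power_sum (p n : ℕ) (hp : p.Prime) (hodd : Odd p)
    (hn : 2 ≤ n) :
    ratModEq p (((n : ℚ) ^ p - n) / p)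
      (- ∑ r ∈ Finset.Icc 1 (p - 1),
          (-1 : ℚ) ^ r * (∑ i ∈ Finset.Icc 1 (n - 1), (i : ℚ) ^ r) / r) := by
  have hp0 : (p : ℚ) ≠ 0 := Nat.cast_ne_zero.mpr hp.pos.ne'
  have hp1 : p - 1 + 1 = p := by have := hp.pos; omega
  have hn1 : n - 1 + 1 = n := by omega
  set S : ℕ → ℚ := fun r => ∑ i ∈ Finset.Icc 1 (n - 1), (i : ℚ) ^ r with hS
  -- Step A: binomial + telescoping
  have hbin : ∀ k : ℕ, ((k : ℚ) + 1) ^ p - (k : ℚ) ^ p - 1 =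
      ∑ r ∈ Finset.Icc 1 (p - 1), (p.choose r : ℚ) * (k : ℚ) ^ r := by
    intro k
    have h := add_pow (k : ℚ) 1 p
    simp only [one_pow, mul_one] at h
    rw [sum_Icc_one]
    have hsplit : ∑ m ∈ Finset.range (p + 1), (k : ℚ) ^ m * (p.choose m : ℚ) =
        (∑ i ∈ Finset.range (p - 1), (k : ℚ) ^ (i + 1) * (p.choose (i + 1) : ℚ))
          + (k : ℚ) ^ p + 1 := by
      rw [Finset.sum_range_succ' (fun m => (k : ℚ) ^ m * (p.choose m : ℚ)) p]
      have h2 := Finset.sum_range_succ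
        (fun i => (k : ℚ) ^ (i + 1) * (p.choose (i + 1) : ℚ)) (p - 1)
      rw [hp1] at h2
      rw [h2, Nat.choose_self]
      simp
    rw [h, hsplit]
    have : ∀ i ∈ Finset.range (p - 1),
        (k : ℚ) ^ (i + 1) * (p.choose (i + 1) : ℚ) =
          (p.choose (i + 1) : ℚ) * (k : ℚ) ^ (i + 1) := fun i _ => mul_comm _ _
    rw [Finset.sum_congr rfl this]
    ring
  have hA : (n : ℚ) ^ p - n = ∑ r ∈ Finset.Icc 1 (p - 1), (p.choose r : ℚ) * S r := by
    have ht : ∑ k ∈ Finset.Icc 1 (n - 1), (((k : ℚ) + 1) ^ p - (k : ℚ) ^ p - 1)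
        = (n : ℚ) ^ p - n := by
      rw [sum_Icc_one]
      have hterm : ∀ i ∈ Finset.range (n - 1),
          (((i + 1 : ℕ) : ℚ) + 1) ^ p - ((i + 1 : ℕ) : ℚ) ^ p - 1
            = ((fun j : ℕ => ((j : ℚ) + 1) ^ p) (i + 1)
                - (fun j : ℕ => ((j : ℚ) + 1) ^ p) i) - 1 := by
        intro i _; push_cast; ring
      rw [Finset.sum_congr rfl hterm, Finset.sum_sub_distrib,
        Finset.sum_range_sub (fun j : ℕ => ((j : ℚ) + 1) ^ p)]
      simp only [Finset.sum_const, Finset.card_range, nsmul_eq_mul, mul_one,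
        Nat.cast_zero, zero_add, one_pow]
      rw [Nat.cast_sub (by omega : 1 ≤ n)]
      push_cast
      ring
    rw [← ht]
    rw [Finset.sum_congr rfl fun k _ => hbin k, Finset.sum_comm]
    exact Finset.sum_congr rfl fun r _ => by rw [Finset.mul_sum]
  -- Step B + assembly: the difference as an explicit sum
  have hMain : ((n : ℚ) ^ p - n) / p -
      (- ∑ r ∈ Finset.Icc 1 (p - 1), (-1 : ℚ) ^ r * S r / r) =
      ∑ r ∈ Finset.Icc 1 (p - 1),
        (((((p - 1).choose (r - 1) : ℤ) - (-1) ^ (r - 1)) *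
            (∑ i ∈ Finset.Icc 1 (n - 1), (i : ℤ) ^ r) : ℤ) : ℚ) / ((r : ℤ) : ℚ) := by
    rw [hA, sub_neg_eq_add, Finset.sum_div, ← Finset.sum_add_distrib]
    refine Finset.sum_congr rfl fun r hr => ?_
    rw [Finset.mem_Icc] at hr
    obtain ⟨m, rfl⟩ : ∃ m, r = m + 1 := ⟨r - 1, by omega⟩
    have hB : (p : ℚ) * ((p - 1).choose m : ℚ) =
        (p.choose (m + 1) : ℚ) * ((m : ℚ) + 1) := by
      have h := Nat.add_one_mul_choose_eq (p - 1) m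
      rw [hp1] at h
      exact_mod_cast congrArg (Nat.cast : ℕ → ℚ) h
    have hm0 : ((m : ℚ) + 1) ≠ 0 := by positivity
    simp only [Nat.add_sub_cancel]
    push_cast
    have hfold : ∑ i ∈ Finset.Icc 1 (n - 1), (i : ℚ) ^ (m + 1) = S (m + 1) := rfl
    rw [hfold]
    field_simp
    linear_combination (-1 : ℚ) * S (m + 1) * hB
  rw [ratModEq, hMain]
  refine num_sum_dvd hp fun r hr => ?_
  rw [Finset.mem_Icc] at hr
  refine num_div_dvd hp (Dvd.dvd.mul_right (choose_cong hp (r - 1) (by omega)) _) ?_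
  intro hd
  have : p ∣ r := Int.ofNat_dvd.mp hd
  have := Nat.le_of_dvd (by omega) this
  omega
end

section
/- Let p be an odd prime. Then (2^(p-1) - 1)/p ≡ -(1/2) · ∑_{j=1}^{p-1} 2^j/j (mod p). -/
open Finset

lemma num_dvd_aux (p : ℕ) (hp : p.Prime) (q : ℚ) (a b : ℤ)
    (hq : q = (a : ℚ) / b) (ha : (p:ℤ) ∣ a) (hb : ¬ (p:ℤ) ∣ b) :
    (p:ℤ) ∣ q.num := by
  have hpZ : Prime (p:ℤ) := Nat.prime_iff_prime_int.mp hp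
  have hb0 : b ≠ 0 := by rintro rfl; exact hb (dvd_zero _)
  have hbQ : (b : ℚ) ≠ 0 := Int.cast_ne_zero.mpr hb0
  have hd : (q.den : ℚ) ≠ 0 := by exact_mod_cast q.den_ne_zero
  have h1 : (q.num : ℚ) * b = a * q.den := by
    rw [← Rat.num_div_den q] at hq
    field_simp at hq
    linarith [hq]
  have h2 : q.num * b = a * q.den := by exact_mod_cast h1
  have : (p:ℤ) ∣ q.num * b := h2 ▸ Dvd.dvd.mul_right ha _
  rcases (hpZ.dvd_mul.mp this) with h | h
  · exact h
  · exact absurd h hb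

lemma choose_neg_one (p : ℕ) (hp : p.Prime) :
    ∀ k, k ≤ p - 1 → (((p-1).choose k : ℕ) : ZMod p) = (-1)^k := by
  intro k
  induction k with
  | zero => intro _; simp
  | succ k ih =>
    intro hk
    have hk' : k ≤ p - 1 := le_of_lt (Nat.lt_of_succ_le hk)
    have hp1 : p - 1 + 1 = p := Nat.succ_pred_eq_of_pos hp.pos
    have hpas : p.choose (k+1) = (p-1).choose k + (p-1).choose (k+1) := by
      conv_lhs => rw [← hp1]
      exact Nat.choose_succ_succ _ _
    have hdvd : p ∣ p.choose (k+1) :=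
      hp.dvd_choose_self (Nat.succ_ne_zero k) (by have := hp.two_le; omega)
    have h0 : ((p.choose (k+1) : ℕ) : ZMod p) = 0 :=
      (ZMod.natCast_eq_zero_iff _ _).mpr hdvd
    have hc := congrArg (Nat.cast : ℕ → ZMod p) hpas
    push_cast at hc
    rw [h0] at hc
    have := ih hk'
    push_cast at this ⊢
    rw [pow_succ]
    rw [← this]
    linear_combination -hc

lemma key1 (p : ℕ) (hp : 3 ≤ p) (hodd : Odd p) :
    (2:ℤ)^p - 2 = ∑ j ∈ Icc 1 (p-1), (p.choose j : ℤ) * (-2)^j := by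
  have h := add_pow (-2 : ℤ) 1 p
  have hneg : ((-2 : ℤ) + 1)^p = -1 := by
    norm_num [hodd.neg_one_pow]
  rw [hneg] at h
  have hsplit : ∑ k ∈ range (p+1), (-2:ℤ)^k * 1^(p-k) * p.choose k
      = (∑ k ∈ range p, (-2:ℤ)^k * 1^(p-k) * p.choose k) + (-2)^p := by
    rw [Finset.sum_range_succ]; simp
  have hbot : ∑ k ∈ range p, (-2:ℤ)^k * 1^(p-k) * p.choose k
      = 1 + ∑ k ∈ Ico 1 p, (-2:ℤ)^k * 1^(p-k) * p.choose k := by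
    rw [Finset.range_eq_Ico, Finset.sum_eq_sum_Ico_succ_bot (by omega : 0 < p)]
    simp
  have hIco : Ico 1 p = Icc 1 (p-1) := by
    rw [← Finset.Ico_add_one_right_eq_Icc]; congr 1; omega
  have h2p : (-2:ℤ)^p = -(2^p) := by
    rw [hodd.neg_pow]
  rw [hsplit, hbot, hIco, h2p] at h
  have : ∑ j ∈ Icc 1 (p-1), (-2:ℤ)^j * 1^(p-j) * p.choose j
      = ∑ j ∈ Icc 1 (p-1), (p.choose j : ℤ) * (-2)^j := by
    apply Finset.sum_congr rfl; intro j _; ring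
  rw [this] at h
  linarith

theorem fermat_quotient_two_power_sum (p : ℕ) (hp : p.Prime) (hodd : Odd p) :
    ratModEq p ((2 ^ (p - 1) - 1 : ℚ) / p)
      (-(1 / 2) * ∑ j ∈ Finset.Icc 1 (p - 1), (2 : ℚ) ^ j / j) := by
  have hp3 : 3 ≤ p := by
    rcases hp.two_le.lt_or_eq with h | h
    · omega
    · exfalso; rw [← h] at hodd; exact (by decide : ¬ Odd 2) hodd
  haveI : NeZero p := ⟨by omega⟩
  have hpQ : (p : ℚ) ≠ 0 := Nat.cast_ne_zero.mpr (by omega)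
  set F : ℕ := Nat.factorial (p-1) with hFdef
  have hFQ : (F : ℚ) ≠ 0 := Nat.cast_ne_zero.mpr (Nat.factorial_ne_zero _)
  set c : ℕ → ℤ := fun j => ((F / j : ℕ) : ℤ) with hc
  have hjc : ∀ j ∈ Icc 1 (p-1), (j : ℤ) * c j = (F : ℤ) := by
    intro j hj
    rw [mem_Icc] at hj
    have hd : j ∣ F := Nat.dvd_factorial (by omega) hj.2
    have h := Nat.mul_div_cancel' hd
    simp only [hc]
    exact_mod_cast h
  set S : ℤ := ∑ j ∈ Icc 1 (p-1),
      c j * (((p-1).choose (j-1) : ℤ) * (-2)^j + 2^j) with hS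
  have h1 : ((2 ^ (p - 1) - 1 : ℚ) / p) * (2 * p * F)
      = ∑ j ∈ Icc 1 (p-1), ((c j * ((p-1).choose (j-1) : ℤ) * (-2)^j : ℤ) : ℚ) * p := by
    have h2p : (2:ℚ)^(p-1) * 2 = 2^p := by
      rw [← pow_succ]; congr 1; omega
    have hcancel : ((2 ^ (p - 1) - 1 : ℚ) / p) * (2 * p * F)
        = ((2:ℚ)^p - 2) * F := by
      rw [← h2p]
      field_simp
    rw [hcancel]
    have hk := key1 p hp3 hodd
    have hkQ : ((2:ℚ)^p - 2) = ∑ j ∈ Icc 1 (p-1), (p.choose j : ℚ) * (-2)^j := by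
      have := congrArg (fun z : ℤ => (z : ℚ)) hk
      push_cast at this
      exact this
    rw [hkQ, Finset.sum_mul]
    apply Finset.sum_congr rfl
    intro j hj
    rw [mem_Icc] at hj
    have hmul : (j:ℤ) * (p.choose j : ℤ) = (p:ℤ) * ((p-1).choose (j-1) : ℤ) := by
      have h := Nat.add_one_mul_choose_eq (p-1) (j-1)
      rw [show p - 1 + 1 = p by omega, show j - 1 + 1 = j by omega] at h
      exact_mod_cast (mul_comm j (p.choose j)).trans h.symm
    have hcF : (p.choose j : ℤ) * F = c j * ((p-1).choose (j-1) : ℤ) * p := by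
      have hjcj := hjc j (by rw [mem_Icc]; omega)
      calc (p.choose j : ℤ) * F = (p.choose j : ℤ) * ((j:ℤ) * c j) := by rw [hjcj]
        _ = ((j:ℤ) * (p.choose j : ℤ)) * c j := by ring
        _ = ((p:ℤ) * ((p-1).choose (j-1) : ℤ)) * c j := by rw [hmul]
        _ = c j * ((p-1).choose (j-1) : ℤ) * p := by ring
    have hcFQ := congrArg (fun z : ℤ => (z : ℚ)) hcF
    push_cast at hcFQ
    push_cast
    linear_combination ((-2:ℚ))^j * hcFQ
  have h2 : (-(1 / 2 : ℚ) * ∑ j ∈ Icc 1 (p-1), (2:ℚ)^j/j) * (2 * p * F)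
      = ∑ j ∈ Icc 1 (p-1), ((-(c j * 2^j) : ℤ) : ℚ) * p := by
    rw [Finset.mul_sum, Finset.sum_mul]
    apply Finset.sum_congr rfl
    intro j hj
    rw [mem_Icc] at hj
    have hj0 : (j : ℚ) ≠ 0 := Nat.cast_ne_zero.mpr (by omega)
    have hjQ : (j:ℚ) * ((c j : ℤ) : ℚ) = (F : ℚ) := by
      exact_mod_cast congrArg (fun z : ℤ => (z : ℚ)) (hjc j (by rw [mem_Icc]; omega))
    push_cast
    rw [← hjQ]
    field_simp
  have hmain : (((2 ^ (p - 1) - 1 : ℚ) / p) - (-(1 / 2 : ℚ) * ∑ j ∈ Icc 1 (p-1), (2:ℚ)^j/j))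
      * (2 * p * F) = ((S : ℤ) : ℚ) * p := by
    rw [sub_mul, h1, h2, hS]
    push_cast
    rw [← Finset.sum_sub_distrib, Finset.sum_mul]
    apply Finset.sum_congr rfl
    intro j hj
    ring
  -- p divides S
  have hSd : (p:ℤ) ∣ S := by
    rw [hS]
    apply Finset.dvd_sum
    intro j hj
    rw [mem_Icc] at hj
    have hterm : (p:ℤ) ∣ (((p-1).choose (j-1) : ℤ) * (-2)^j + 2^j) := by
      rw [← ZMod.intCast_zmod_eq_zero_iff_dvd]
      push_cast
      rw [choose_neg_one p hp (j-1) (by omega)]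
      have hn2 : ((-2 : ZMod p))^j = (-1)^j * 2^j := by
        rw [neg_pow]
      rw [hn2, ← mul_assoc, ← pow_add]
      have hoddj : Odd (j - 1 + j) := by rw [Nat.odd_iff]; omega
      rw [hoddj.neg_one_pow]
      ring
    exact hterm.mul_left _
  obtain ⟨T, hT⟩ := hSd
  have h2pF : (2 * (p:ℚ) * F) ≠ 0 := by positivity
  have hxy : ((2 ^ (p - 1) - 1 : ℚ) / p) - (-(1 / 2 : ℚ) * ∑ j ∈ Icc 1 (p-1), (2:ℚ)^j/j)
      = (((p:ℤ) * T : ℤ) : ℚ) / ((2 * (F:ℤ) : ℤ) : ℚ) := by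
    rw [eq_div_iff (by push_cast; positivity)]
    have := hmain
    rw [hT] at this
    push_cast at this ⊢
    apply mul_right_cancel₀ hpQ
    linear_combination this
  show (p:ℤ) ∣ _
  apply num_dvd_aux p hp _ ((p:ℤ) * T) (2 * (F:ℤ)) hxy (Dvd.intro T rfl)
  rw [show ((2 * (F:ℤ))) = ((2 * F : ℕ) : ℤ) by push_cast; ring, Int.natCast_dvd_natCast]
  intro hdd
  rcases (Nat.Prime.dvd_mul hp).mp hdd with h | h
  · have := Nat.le_of_dvd (by norm_num) h; omega
  · exact absurd ((Nat.Prime.dvd_factorial hp).mp h) (by omega)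
end

section
/- Let p be an odd prime. Then (2^(p-1) - 1)/p ≡ -(1/2) · ∑_{j=1}^{p-1} (-1)^j/j (mod p). -/
open Finset Nat

lemma choose_sub_one_congr (p : ℕ) (hp : p.Prime) : ∀ j, j ≤ p - 1 →
    (p : ℤ) ∣ ((p-1).choose j : ℤ) - (-1)^j := by
  intro j
  induction j with
  | zero => simp
  | succ j ih =>
    intro hj
    have hp1 : 1 ≤ p := hp.one_lt.le
    have h1 := ih (by omega)
    have h2 : (p : ℤ) ∣ (p.choose (j+1) : ℤ) :=
      Int.natCast_dvd_natCast.mpr (Nat.Prime.dvd_choose_self hp (by omega) (by omega))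
    have h3 : ((p-1).choose j : ℤ) + ((p-1).choose (j+1) : ℤ) = (p.choose (j+1) : ℤ) := by
      have hP : p - 1 + 1 = p := by omega
      rw [← hP, Nat.choose_succ_succ (p-1) j]
      push_cast; ring
    have key : ((p-1).choose (j+1) : ℤ) - (-1)^(j+1)
        = ((p.choose (j+1)) : ℤ) - (((p-1).choose j : ℤ) - (-1)^j) := by
      linear_combination h3
    rw [key]
    exact dvd_sub h2 h1

theorem fermat_quotient_alternating_harmonic (p : ℕ) (hp : p.Prime) (hodd : Odd p) :
    ratModEq p ((2 ^ (p - 1) - 1 : ℚ) / p)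
      (-(1 / 2) * ∑ j ∈ Finset.Icc 1 (p - 1), (-1 : ℚ) ^ j / j) := by
  have hp2 : 2 ≤ p := hp.two_le
  have hp3 : 3 ≤ p := by
    obtain ⟨k, hk⟩ := hodd; omega
  have hP : p - 1 + 1 = p := by omega
  have hpQ : (p : ℚ) ≠ 0 := by positivity
  set T : ℚ := ∑ j ∈ Finset.Icc 1 (p - 1), (-1 : ℚ) ^ j / j with hT
  set n : ℤ := ∑ k ∈ Icc 1 (p-1),
      (((p-1)! / k : ℕ) : ℤ) * (((p-1).choose (k-1) : ℤ) + (-1)^k) with hn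
  -- p divides n
  have hdvdn : (p : ℤ) ∣ n := by
    apply Finset.dvd_sum
    intro k hk
    simp only [Finset.mem_Icc] at hk
    obtain ⟨m, rfl⟩ : ∃ m, k = m + 1 := ⟨k - 1, by omega⟩
    have hc := choose_sub_one_congr p hp m (by omega)
    have : ((p-1).choose (m+1-1) : ℤ) + (-1)^(m+1)
        = ((p-1).choose m : ℤ) - (-1)^m := by
      simp only [Nat.add_sub_cancel]; ring
    rw [this]
    exact Dvd.dvd.mul_left hc _
  -- binomial sum
  have hbinomN : (∑ k ∈ Icc 1 (p-1), p.choose k) + 2 = 2^p := by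
    have h := Nat.sum_range_choose p
    rw [Finset.range_eq_Ico, Finset.sum_Ico_succ_top (by omega),
      Finset.sum_eq_sum_Ico_succ_bot (by omega : 0 < p)] at h
    have hIco : Finset.Ico (0+1) p = Finset.Icc 1 (p-1) := by
      rw [← Finset.Ico_add_one_right_eq_Icc]
      congr 1; omega
    rw [hIco, Nat.choose_zero_right, Nat.choose_self] at h
    omega
  have hbinom : (∑ k ∈ Icc 1 (p-1), (p.choose k : ℚ)) = 2^p - 2 := by
    have : ((∑ k ∈ Icc 1 (p-1), p.choose k : ℕ) : ℚ) + 2 = 2^p := by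
      exact_mod_cast congrArg (Nat.cast : ℕ → ℚ) hbinomN
    push_cast at this
    linarith
  -- value of n in ℚ
  have hcast : (n : ℚ) = ((p-1)! : ℚ)/p * (2^p - 2) + ((p-1)! : ℚ) * T := by
    have hterm : ∀ k ∈ Icc 1 (p-1),
        ((((((p-1)! / k : ℕ) : ℤ) * (((p-1).choose (k-1) : ℤ) + (-1)^k)) : ℤ) : ℚ)
        = ((p-1)! : ℚ)/p * (p.choose k) + ((p-1)! : ℚ) * ((-1)^k / k) := by
      intro k hk
      simp only [Finset.mem_Icc] at hk
      have hkdvd : k ∣ (p-1)! := Nat.dvd_factorial (by omega) hk.2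
      have hkQ : (k : ℚ) ≠ 0 := Nat.cast_ne_zero.mpr (by omega)
      have hdivcast : ((((p-1)! / k : ℕ) : ℤ) : ℚ) = ((p-1)! : ℚ) / k := by
        rw [Int.cast_natCast, Nat.cast_div hkdvd hkQ]
      have hkc : (p : ℚ) * ((p-1).choose (k-1)) = (p.choose k) * k := by
        have h5 := Nat.add_one_mul_choose_eq (p-1) (k-1)
        have hk1 : k - 1 + 1 = k := by omega
        rw [hP, hk1] at h5
        exact_mod_cast congrArg (Nat.cast : ℕ → ℚ) h5
      have hC : (((p-1).choose (k-1) : ℕ) : ℚ) = (p.choose k : ℚ) * k / p := by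
        rw [eq_div_iff hpQ]
        linear_combination hkc
      rw [Int.cast_mul, Int.cast_add, hdivcast]
      push_cast
      rw [hC]
      field_simp
    rw [hn, Int.cast_sum]
    rw [Finset.sum_congr rfl hterm, Finset.sum_add_distrib, ← Finset.mul_sum,
      ← Finset.mul_sum, hbinom]
  -- the key rational equation
  set r : ℚ := (2 ^ (p - 1) - 1 : ℚ) / p - (-(1 / 2) * T) with hr
  have hreq : r * (2 * (p-1)!) = n := by
    rw [hcast, hr]
    have h2p : (2:ℚ)^p = 2^(p-1) * 2 := by rw [← pow_succ, hP]
    field_simp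
    ring_nf
    rw [h2p]
  -- conclude
  show (p : ℤ) ∣ r.num
  have hdQ : (r.den : ℚ) ≠ 0 := by positivity
  have hrnum : (r.num : ℚ) = r * r.den := by
    nth_rewrite 2 [← Rat.num_div_den r]
    rw [div_mul_cancel₀ _ hdQ]
  have hnum : (r.num : ℚ) * (2 * (p-1)!) = (n : ℚ) * (r.den : ℚ) := by
    rw [hrnum, ← hreq]
    ring
  have hZ : r.num * (2 * ((p-1)! : ℤ)) = n * (r.den : ℤ) := by exact_mod_cast hnum
  have hpZ : Prime (p : ℤ) := Nat.prime_iff_prime_int.mp hp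
  have hdvd2 : (p : ℤ) ∣ r.num * (2 * ((p-1)! : ℤ)) := by
    rw [hZ]; exact hdvdn.mul_right _
  have hnotdvd : ¬ (p : ℤ) ∣ (2 * ((p-1)! : ℤ)) := by
    have : ¬ p ∣ 2 * (p-1)! := by
      intro h
      rcases (Nat.Prime.dvd_mul hp).mp h with h | h
      · have := Nat.le_of_dvd (by norm_num) h; omega
      · have := (Nat.Prime.dvd_factorial hp).mp h; omega
    intro h
    exact this (by exact_mod_cast h)
  rcases hpZ.dvd_mul.mp hdvd2 with h | h
  · exact h
  · exact absurd h hnotdvd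
end

section
/- Let p be an odd prime and a an integer. Then (a^p - a)/p ≡ ∑_{r=1}^{p-1} (a+1)^r/r + ((a+1)^p - (a+1))/p (mod p). -/
-- helper 1: C(p-1, j) ≡ (-1)^j mod p
lemma choose_sub_one_cast (p : ℕ) (hp : p.Prime) : ∀ j, j < p →
    (((p-1).choose j : ZMod p)) = (-1)^j := by
  intro j
  induction j with
  | zero => simp
  | succ k ih =>
    intro hk
    have hk' : k < p := Nat.lt_of_succ_lt hk
    have hpas : p.choose (k+1) = (p-1).choose k + (p-1).choose (k+1) := by
      conv_lhs => rw [← Nat.succ_pred_eq_of_pos hp.pos]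
      rw [Nat.choose_succ_succ]; rfl
    have hdvd : p ∣ p.choose (k+1) := Nat.Prime.dvd_choose_self hp (Nat.succ_ne_zero k) hk
    have h0 : ((p.choose (k+1) : ZMod p)) = 0 := by
      exact_mod_cast (ZMod.natCast_eq_zero_iff _ _).2 hdvd
    have := congrArg (fun n : ℕ => (n : ZMod p)) hpas
    push_cast at this
    rw [h0, ih hk'] at this
    linear_combination -this

lemma num_dvd_of_padicNorm_le (p : ℕ) [hpf : Fact p.Prime] (q : ℚ)
    (h : padicNorm p q ≤ (p:ℚ)⁻¹) : (p:ℤ) ∣ q.num := by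
  have hq := Rat.num_div_den q
  by_cases hd : (p:ℤ) ∣ (q.den : ℤ)
  · exfalso
    have hnum : ¬ (p:ℤ) ∣ q.num := by
      intro hn
      have h1 : (p:ℕ) ∣ q.num.natAbs := Int.natCast_dvd_natCast.1 (Int.dvd_natAbs.2 hn)
      have h2 : (p:ℕ) ∣ q.den := Int.ofNat_dvd.1 hd
      have := Nat.eq_one_of_dvd_coprimes q.reduced h1 h2
      exact Nat.Prime.ne_one hpf.out this
    have hn1 : padicNorm p (q.num : ℚ) = 1 := (padicNorm.int_eq_one_iff _).2 hnum
    rw [← hq, padicNorm.div] at h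
    have hden0 : ((q.den : ℚ)) ≠ 0 := by
      exact_mod_cast q.den_ne_zero
    have hdenpos : 0 < padicNorm p ((q.den : ℚ)) :=
      lt_of_le_of_ne (padicNorm.nonneg _) (Ne.symm (padicNorm.nonzero hden0))
    have hden1 : padicNorm p ((q.den : ℚ)) ≤ 1 := by
      have := padicNorm.of_int (p := p) (q.den : ℤ)
      push_cast at this
      exact this
    have hcast : ((q.num : ℚ)) = (((q.num : ℤ)) : ℚ) := by norm_num
    rw [hn1] at h
    have : (1:ℚ) ≤ padicNorm p ((q.den : ℚ)) * (p:ℚ)⁻¹ := by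
      rw [div_le_iff₀ hdenpos] at h
      linarith [h]
    have hplarge : (1:ℚ) < (p:ℚ) := by exact_mod_cast hpf.out.one_lt
    have : padicNorm p ((q.den:ℚ)) * (p:ℚ)⁻¹ < 1 := by
      have hpinv : (p:ℚ)⁻¹ < 1 := by
        rw [inv_lt_one_iff₀]; right; exact hplarge
      nlinarith [hdenpos, hden1, hpinv]
    linarith
  · have hden1 : padicNorm p ((q.den : ℚ)) = 1 := by
      have := (padicNorm.int_eq_one_iff (p := p) (q.den : ℤ)).2 hd
      push_cast at this
      exact this
    rw [← hq, padicNorm.div, hden1, div_one] at h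
    have : ((p^1 : ℕ) : ℤ) ∣ q.num := by
      rw [padicNorm.dvd_iff_norm_le]
      simpa using h
    simpa using this

lemma key_sum (p : ℕ) (hp : p.Prime) (hodd : Odd p) (x : ℚ) :
    ∑ r ∈ Finset.Ico 1 p, (-1:ℚ)^(r+1) * ((p-1).choose (r-1) : ℚ) / r * (x+1)^r
      = (x^p + 1 - (x+1)^p) / p := by
  have hp0 : (p:ℚ) ≠ 0 := Nat.cast_ne_zero.2 hp.pos.ne'
  have hps : p - 1 + 1 = p := Nat.succ_pred_eq_of_pos hp.pos
  rw [eq_div_iff hp0, Finset.sum_mul]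
  have hterm : ∀ r ∈ Finset.Ico 1 p,
      (-1:ℚ)^(r+1) * ((p-1).choose (r-1) : ℚ) / r * (x+1)^r * p
        = -((-(x+1))^r * (p.choose r : ℚ)) := by
    intro r hr
    obtain ⟨hr1, hrp⟩ := Finset.mem_Ico.1 hr
    have hre : r - 1 + 1 = r := Nat.succ_pred_eq_of_pos hr1
    have hnat : p * (p-1).choose (r-1) = p.choose r * r := by
      have h := Nat.add_one_mul_choose_eq (p-1) (r-1)
      simp only [Nat.succ_eq_add_one, hps, hre] at h
      exact h
    have hQ : (p:ℚ) * ((p-1).choose (r-1) : ℚ) = (p.choose r : ℚ) * r := by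
      exact_mod_cast hnat
    have hr0 : (r:ℚ) ≠ 0 := Nat.cast_ne_zero.2 (by omega)
    have hneg : (-(x+1))^r = (-1:ℚ)^r * (x+1)^r := by rw [neg_pow]
    rw [hneg]
    field_simp
    linear_combination (-1:ℚ)^(r+1) * (x+1)^r * hQ
  rw [Finset.sum_congr rfl hterm]
  have hbin := add_pow (-(x+1)) (1:ℚ) p
  simp only [one_pow, mul_one, Finset.range_eq_Ico] at hbin
  rw [Finset.sum_Ico_succ_top (Nat.zero_le p), Finset.sum_eq_sum_Ico_succ_bot hp.pos] at hbin
  have hx : (-(x+1) + 1) = -x := by ring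
  rw [hx, Odd.neg_pow hodd, Odd.neg_pow hodd] at hbin
  simp only [pow_zero, Nat.choose_zero_right, Nat.choose_self, Nat.cast_one, one_mul,
    mul_one] at hbin
  simp only [zero_add] at hbin
  have hS : ∑ r ∈ Finset.Ico 1 p, (-(x + 1)) ^ r * ((p.choose r : ℚ)) = -x^p - 1 + (x+1)^p := by
    linarith [hbin]
  rw [Finset.sum_neg_distrib, hS]
  ring

theorem fermat_quotient_shift (p : ℕ) (hp : p.Prime) (hodd : Odd p) (a : ℤ) :
    ratModEq p (((a : ℚ) ^ p - a) / p)
      ((∑ r ∈ Finset.Icc 1 (p - 1), ((a : ℚ) + 1) ^ r / r) +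
        (((a : ℚ) + 1) ^ p - ((a : ℚ) + 1)) / p) := by
  haveI : Fact p.Prime := ⟨hp⟩
  have hps : p - 1 + 1 = p := Nat.succ_pred_eq_of_pos hp.pos
  have hIcc : Finset.Icc 1 (p-1) = Finset.Ico 1 p := by
    rw [← Finset.Ico_add_one_right_eq_Icc]
    congr 1
  unfold ratModEq
  have hxy : ((a : ℚ) ^ p - a) / p -
      ((∑ r ∈ Finset.Icc 1 (p - 1), ((a : ℚ) + 1) ^ r / r) +
        (((a : ℚ) + 1) ^ p - ((a : ℚ) + 1)) / p)
      = -(∑ r ∈ Finset.Ico 1 p,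
          ((1 - (-1:ℤ)^(r+1) * ((p-1).choose (r-1) : ℤ) : ℤ) : ℚ) / r * ((a:ℚ)+1)^r) := by
    have hsplit : ∀ r ∈ Finset.Ico 1 p,
        ((1 - (-1:ℤ)^(r+1) * ((p-1).choose (r-1):ℤ) : ℤ):ℚ)/r * ((a:ℚ)+1)^r
          = ((a:ℚ)+1)^r / r - (-1:ℚ)^(r+1) * ((p-1).choose (r-1):ℚ)/r * ((a:ℚ)+1)^r := by
      intro r hr
      push_cast
      ring
    rw [hIcc, Finset.sum_congr rfl hsplit, Finset.sum_sub_distrib, key_sum p hp hodd (a:ℚ)]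
    ring
  rw [hxy]
  simp only [Rat.neg_num, dvd_neg]
  apply num_dvd_of_padicNorm_le
  apply padicNorm.sum_le' _ (by positivity)
  intro r hr
  obtain ⟨hr1, hrp⟩ := Finset.mem_Ico.1 hr
  have hm : (p:ℤ) ∣ (1 - (-1:ℤ)^(r+1) * ((p-1).choose (r-1):ℤ)) := by
    rw [← ZMod.intCast_zmod_eq_zero_iff_dvd]
    push_cast
    rw [choose_sub_one_cast p hp (r-1) (by omega)]
    have hrr : (r + 1) + (r - 1) = 2*r := by omega
    rw [← pow_add, hrr, pow_mul]
    norm_num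
  have h1 : padicNorm p (((1 - (-1:ℤ)^(r+1) * ((p-1).choose (r-1):ℤ) : ℤ) : ℚ)) ≤ (p:ℚ)⁻¹ := by
    have := (padicNorm.dvd_iff_norm_le (p := p) (n := 1)
      (z := 1 - (-1:ℤ)^(r+1) * ((p-1).choose (r-1):ℤ))).1 (by simpa using hm)
    simpa using this
  have hrdvd : ¬ (p:ℤ) ∣ (r:ℤ) := by
    rw [Int.natCast_dvd_natCast]
    intro h
    exact absurd (Nat.le_of_dvd (by omega) h) (by omega)
  have h2 : padicNorm p ((r:ℚ)) = 1 := by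
    have := (padicNorm.int_eq_one_iff (p := p) (r:ℤ)).2 hrdvd
    push_cast at this
    exact this
  have h3 : padicNorm p (((a:ℚ)+1)^r) ≤ 1 := by
    have hc : ((a:ℚ)+1)^r = (((a+1)^r : ℤ) : ℚ) := by push_cast; ring
    rw [hc]
    exact padicNorm.of_int _
  rw [padicNorm.mul, padicNorm.div, h2, div_one]
  calc padicNorm p (((1 - (-1:ℤ)^(r+1) * ((p-1).choose (r-1):ℤ) : ℤ) : ℚ)) * padicNorm p (((a:ℚ)+1)^r)
      ≤ (p:ℚ)⁻¹ * 1 := mul_le_mul h1 h3 (padicNorm.nonneg _) (by positivity)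
    _ = (p:ℚ)⁻¹ := mul_one _
end

section
/- For any odd positive integer n, the polynomial identity ∑_{r=1}^{n} (-1)^(r-1) x^r / r = ∑_{r=1}^{n} binomial(n, r) · (-1)^(r-1) (x+1)^r / r + ∑_{r=1}^{n} (-1)^r binomial(n, r) / r holds (as an identity of polynomials over the rationals, equivalently for all rational x). -/
open Finset

private lemma binom_sum (m : ℕ) (y : ℚ) :
    ∑ r ∈ range (m+1), (m.choose r : ℚ) * y ^ r = (1 + y) ^ m := by
  rw [add_comm 1 y, add_pow]
  exact Finset.sum_congr rfl fun r hr => by ring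

private lemma binom_sum' (m : ℕ) (y : ℚ) :
    ∑ r ∈ Icc 1 m, (m.choose r : ℚ) * y ^ r = (1 + y) ^ m - 1 := by
  have h : range (m+1) = insert 0 (Icc 1 m) := by
    ext r; simp; omega
  have h0 : (0:ℕ) ∉ Icc 1 m := by simp
  have hb := binom_sum m y
  rw [h, Finset.sum_insert h0] at hb
  simp at hb
  linarith

private lemma Blem (n : ℕ) (x : ℚ) :
    ∑ r ∈ Icc 1 (n+1), ((n+1).choose r : ℚ) * (-1)^(r-1) * ((x+1)^r - 1)
      = (-1)^n * x^(n+1) := by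
  have key : ∀ r ∈ Icc 1 (n+1),
      ((n+1).choose r : ℚ) * (-1)^(r-1) * ((x+1)^r - 1)
        = -(((n+1).choose r : ℚ) * (-(x+1))^r) + ((n+1).choose r : ℚ) * (-1)^r := by
    intro r hr
    simp only [mem_Icc] at hr
    obtain ⟨k, rfl⟩ : ∃ k, r = k + 1 := ⟨r - 1, by omega⟩
    simp only [Nat.add_sub_cancel, neg_pow (x+1)]
    ring
  rw [Finset.sum_congr rfl key, Finset.sum_add_distrib, Finset.sum_neg_distrib,
    binom_sum', binom_sum']
  have h1 : (1 : ℚ) + -(x+1) = -x := by ring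
  have h2 : (1 : ℚ) + -1 = 0 := by ring
  rw [h1, h2, zero_pow (by omega : n + 1 ≠ 0), neg_pow x]
  ring

private lemma step_lem (n : ℕ) (x : ℚ) :
    ∑ r ∈ Icc 1 (n+1), ((n+1).choose r : ℚ) * (-1)^(r-1) * ((x+1)^r - 1) / r
      = (∑ r ∈ Icc 1 n, (n.choose r : ℚ) * (-1)^(r-1) * ((x+1)^r - 1) / r)
        + (-1)^n * x^(n+1) / (n+1) := by
  have pascal : ∀ r ∈ Icc 1 (n+1),
      ((n+1).choose r : ℚ) * (-1)^(r-1) * ((x+1)^r - 1) / r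
        = (n.choose r : ℚ) * (-1)^(r-1) * ((x+1)^r - 1) / r
          + ((n+1).choose r : ℚ) * (-1)^(r-1) * ((x+1)^r - 1) / (n+1) := by
    intro r hr
    simp only [mem_Icc] at hr
    obtain ⟨k, rfl⟩ : ∃ k, r = k + 1 := ⟨r - 1, by omega⟩
    have hp : (((n+1).choose (k+1) : ℕ) : ℚ) = (n.choose k : ℚ) + (n.choose (k+1) : ℚ) := by
      rw [Nat.choose_succ_succ]; push_cast; ring
    have hq : ((n : ℚ) + 1) * (n.choose k : ℚ) = ((n+1).choose (k+1) : ℚ) * ((k : ℚ) + 1) := by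
      exact_mod_cast Nat.add_one_mul_choose_eq n k
    have hk : ((k : ℚ) + 1) ≠ 0 := by positivity
    have hn : ((n : ℚ) + 1) ≠ 0 := by positivity
    have hdiv : (n.choose k : ℚ) / ((k:ℚ)+1)
        = ((n.choose k : ℚ) + (n.choose (k+1) : ℚ)) / ((n:ℚ)+1) := by
      rw [div_eq_div_iff hk hn]
      linear_combination hq + ((k:ℚ)+1) * hp
    simp only [Nat.add_sub_cancel]
    push_cast
    set a : ℚ := (-1)^k * ((x+1)^(k+1) - 1) with ha
    linear_combination a * hdiv + (a/((k:ℚ)+1)) * hp - (a/((n:ℚ)+1)) * hp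
  rw [Finset.sum_congr rfl pascal, Finset.sum_add_distrib]
  congr 1
  · rw [Finset.sum_Icc_succ_top (by omega : 1 ≤ n+1)]
    rw [Nat.choose_eq_zero_of_lt (by omega : n < n + 1)]
    simp
  · rw [← Finset.sum_div, Blem]

private lemma key_id (n : ℕ) (x : ℚ) :
    ∑ r ∈ Icc 1 n, (-1:ℚ)^(r-1) * x^r / r
      = ∑ r ∈ Icc 1 n, (n.choose r : ℚ) * (-1)^(r-1) * ((x+1)^r - 1) / r := by
  induction n with
  | zero => simp
  | succ n ih =>
      rw [Finset.sum_Icc_succ_top (by omega : 1 ≤ n+1), ih, step_lem]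
      simp only [Nat.add_sub_cancel]
      push_cast
      ring

theorem odd_polynomial_identity (n : ℕ) (hn : 0 < n) (hodd : Odd n) (x : ℚ) :
    ∑ r ∈ Finset.Icc 1 n, (-1 : ℚ) ^ (r - 1) * x ^ r / r =
      (∑ r ∈ Finset.Icc 1 n, (n.choose r : ℚ) * (-1) ^ (r - 1) * (x + 1) ^ r / r) +
        ∑ r ∈ Finset.Icc 1 n, (-1 : ℚ) ^ r * (n.choose r) / r := by
  rw [← Finset.sum_add_distrib, key_id n x]
  refine Finset.sum_congr rfl fun r hr => ?_
  simp only [mem_Icc] at hr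
  obtain ⟨k, rfl⟩ : ∃ k, r = k + 1 := ⟨r - 1, by omega⟩
  simp only [Nat.add_sub_cancel, pow_succ]
  ring
end

section
/- For every positive integer n, the polynomial identity ∑_{k=1}^{n} (1-x)^k / k = ∑_{k=1}^{n} binomial(n, k) · (-1)^k (x^k - 1)/k holds (as an identity of polynomials over the rationals, equivalently for all rational x). -/
lemma aux_binom (m : ℕ) (x : ℚ) :
    ∑ k ∈ Finset.range (m+1), (m.choose k : ℚ) * (-1)^k * x^k = (1-x)^m := by
  rw [show (1:ℚ)-x = -x+1 by ring, add_pow (-x) 1 m]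
  apply Finset.sum_congr rfl; intro k hk; ring

lemma icc_to_range (m:ℕ)(f:ℕ→ℚ): ∑ k ∈ Finset.Icc 1 m, f k = ∑ k ∈ Finset.range m, f (k+1) := by
  rw [← Finset.Ico_add_one_right_eq_Icc, Finset.sum_Ico_eq_sum_range]
  simp [Nat.add_comm]

lemma aux_binom_icc (m : ℕ) (hm : 0 < m) (x : ℚ) :
    ∑ k ∈ Finset.Icc 1 m, (m.choose k : ℚ) * (-1)^k * (x^k - 1) = (1-x)^m := by
  have h1 := aux_binom m x
  have h2 := aux_binom m 1
  have h0 : ∑ k ∈ Finset.range (m+1), (m.choose k : ℚ) * (-1)^k * (x^k - 1)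
      = (1-x)^m - (1-(1:ℚ))^m := by
    rw [← h1, ← h2, ← Finset.sum_sub_distrib]
    apply Finset.sum_congr rfl; intro k hk; ring
  have h3 : (1-(1:ℚ))^m = 0 := by
    rw [sub_self]; exact zero_pow (by omega)
  rw [h3, sub_zero] at h0
  rw [icc_to_range, ← h0, Finset.sum_range_succ']
  simp

theorem one_sub_x_power_identity (n : ℕ) (hn : 0 < n) (x : ℚ) :
    ∑ k ∈ Finset.Icc 1 n, (1 - x) ^ k / k =
      ∑ k ∈ Finset.Icc 1 n, (n.choose k : ℚ) * (-1) ^ k * (x ^ k - 1) / k := by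
  induction n, hn using Nat.le_induction with
  | base => norm_num
  | succ n hn ih =>
    rw [Finset.sum_Icc_succ_top (by omega : 1 ≤ n+1) (fun k => (1-x)^k/(k:ℚ)), ih]
    -- split choose (n+1) k = choose n k + choose n (k-1)
    have hsplit : ∀ k ∈ Finset.Icc 1 (n+1),
        ((n+1).choose k : ℚ) * (-1) ^ k * (x ^ k - 1) / k
        = (n.choose k : ℚ) * (-1) ^ k * (x ^ k - 1) / k
          + ((n+1).choose k : ℚ) / (n+1) * ((-1) ^ k * (x ^ k - 1)) := by
      intro k hk
      simp only [Finset.mem_Icc] at hk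
      obtain ⟨j, rfl⟩ : ∃ j, k = j + 1 := ⟨k - 1, by omega⟩
      have hc : (n+1).choose (j+1) = n.choose (j+1) + n.choose j := by
        rw [Nat.choose_succ_succ']; omega
      have hk0 : ((j:ℚ)+1) ≠ 0 := by positivity
      have hn0 : ((n:ℚ)+1) ≠ 0 := by positivity
      have key : (n.choose j : ℚ)/((j:ℚ)+1) = (((n+1).choose (j+1)):ℚ)/((n:ℚ)+1) := by
        rw [div_eq_div_iff hk0 hn0]
        have := Nat.add_one_mul_choose_eq n j
        have h := congrArg (fun m : ℕ => (m : ℚ)) this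
        push_cast at h
        linarith [h]
      have hcq : (((n+1).choose (j+1)):ℚ) = n.choose (j+1) + n.choose j := by
        exact_mod_cast hc
      push_cast
      linear_combination ((-1:ℚ)^(j+1) * (x^(j+1)-1)) * key
        + ((-1:ℚ)^(j+1) * (x^(j+1)-1)/((j:ℚ)+1)) * hcq
    have hS : ∑ k ∈ Finset.Icc 1 (n+1), ((n+1).choose k : ℚ)*(-1)^k*(x^k-1)/k
        = (∑ k ∈ Finset.Icc 1 (n+1), (n.choose k:ℚ)*(-1)^k*(x^k-1)/k)
          + ∑ k ∈ Finset.Icc 1 (n+1), ((n+1).choose k:ℚ)/(n+1)*((-1)^k*(x^k-1)) := by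
      rw [← Finset.sum_add_distrib]; exact Finset.sum_congr rfl hsplit
    have h1 : ∑ k ∈ Finset.Icc 1 (n+1), (n.choose k:ℚ)*(-1)^k*(x^k-1)/k
        = ∑ k ∈ Finset.Icc 1 n, (n.choose k:ℚ)*(-1)^k*(x^k-1)/k := by
      rw [Finset.sum_Icc_succ_top (by omega : 1 ≤ n+1)]
      simp [Nat.choose_succ_self]
    have h2 : ∑ k ∈ Finset.Icc 1 (n+1), ((n+1).choose k:ℚ)/(n+1)*((-1)^k*(x^k-1))
        = (1-x)^(n+1)/(n+1) := by
      have := aux_binom_icc (n+1) (by omega) x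
      rw [← this, Finset.sum_div]
      apply Finset.sum_congr rfl; intro k hk; ring
    rw [hS, h1, h2]
    push_cast
    ring
end

section
/- Let p be an odd prime. Then (2^(p-1) - 1)/p ≡ ∑_{r odd, 1 ≤ r < p} 1/r − p · ∑_{r=1}^{p-1} 2^(r-1)/r^2 (mod p^2). -/
open Finset


namespace FQaux

variable {m : ℕ}

def e (m : ℕ) (x : ℚ) : ZMod m := (x.num : ZMod m) * (x.den : ZMod m)⁻¹

lemma zinv_mul (a b : ZMod m) (ha : IsUnit a) (hb : IsUnit b) : (a * b)⁻¹ = a⁻¹ * b⁻¹ := by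
  have h := ZMod.mul_inv_of_unit (a * b) (ha.mul hb)
  have ha' := ZMod.mul_inv_of_unit a ha
  have hb' := ZMod.mul_inv_of_unit b hb
  linear_combination (-((a*b)⁻¹) * b * b⁻¹) * ha' + (-((a*b)⁻¹)) * hb' + (a⁻¹ * b⁻¹) * h

lemma zinv_sq (a : ZMod m) (ha : IsUnit a) : (a ^ 2)⁻¹ = (a⁻¹) ^ 2 := by
  rw [sq, sq, zinv_mul a a ha ha]

lemma e_pack (x : ℚ) (a b : ℤ) (hb0 : b ≠ 0) (hb : IsUnit ((b : ZMod m)))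
    (hxab : x = (a : ℚ) / (b : ℚ)) :
    IsUnit ((x.den : ZMod m)) ∧ e m x = (a : ZMod m) * ((b : ZMod m))⁻¹ := by
  have hbQ : (b : ℚ) ≠ 0 := by exact_mod_cast hb0
  have hdvd : ((x.den : ℤ)) ∣ b := by
    rw [hxab, ← Rat.divInt_eq_div]; exact Rat.den_dvd a b
  obtain ⟨c, hc⟩ := hdvd
  have hdenu : IsUnit ((x.den : ZMod m)) := by
    have h2 : (b : ZMod m) = (x.den : ZMod m) * (c : ZMod m) := by
      have h3 := congrArg (fun t : ℤ => (t : ZMod m)) hc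
      push_cast at h3; exact h3
    exact isUnit_of_mul_isUnit_left (h2 ▸ hb)
  refine ⟨hdenu, ?_⟩
  have hden0 : (x.den : ℚ) ≠ 0 := by exact_mod_cast x.den_ne_zero
  have hcross : (x.num : ℚ) * b = a * x.den := by
    have h4 : (x.num : ℚ) / (x.den : ℚ) = (a : ℚ) / (b : ℚ) := by
      rw [Rat.num_div_den, hxab]
    rw [div_eq_div_iff hden0 hbQ] at h4; exact h4
  have hcrossZ : x.num * b = a * (x.den : ℤ) := by exact_mod_cast hcross
  have hZ : (x.num : ZMod m) * (b : ZMod m) = (a : ZMod m) * (x.den : ZMod m) := by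
    have h5 := congrArg (fun t : ℤ => (t : ZMod m)) hcrossZ
    push_cast at h5; exact h5
  have h1 := ZMod.mul_inv_of_unit _ hdenu
  have h2 := ZMod.mul_inv_of_unit _ hb
  show (x.num : ZMod m) * (x.den : ZMod m)⁻¹ = _
  linear_combination ((b : ZMod m)⁻¹ * ((x.den : ZMod m))⁻¹) * hZ
    + (-(x.num : ZMod m) * ((x.den : ZMod m))⁻¹) * h2 + ((a : ZMod m) * ((b:ZMod m))⁻¹) * h1

lemma e_intCast (n : ℤ) : e m ((n : ℤ) : ℚ) = (n : ZMod m) := by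
  simp [e]

lemma e_add (x y : ℚ) (hx : IsUnit ((x.den : ZMod m))) (hy : IsUnit ((y.den : ZMod m))) :
    IsUnit (((x + y).den : ZMod m)) ∧ e m (x + y) = e m x + e m y := by
  have hx0 : (x.den : ℚ) ≠ 0 := by exact_mod_cast x.den_ne_zero
  have hy0 : (y.den : ℚ) ≠ 0 := by exact_mod_cast y.den_ne_zero
  have hxy : x + y = ((x.num * y.den + y.num * x.den : ℤ) : ℚ)
      / (((x.den : ℤ) * (y.den : ℤ) : ℤ) : ℚ) := by
    conv_lhs => rw [← Rat.num_div_den x, ← Rat.num_div_den y]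
    push_cast
    rw [div_add_div _ _ hx0 hy0]
    ring_nf
  have hbu : IsUnit ((((x.den : ℤ) * (y.den : ℤ) : ℤ)) : ZMod m) := by
    push_cast; exact hx.mul hy
  obtain ⟨hu, hv⟩ := e_pack (x + y) (x.num * y.den + y.num * x.den) ((x.den : ℤ) * (y.den : ℤ))
    (by positivity) hbu hxy
  refine ⟨hu, ?_⟩
  rw [hv]
  have hmulinv : ((((x.den : ℤ) * (y.den : ℤ) : ℤ)) : ZMod m)⁻¹
      = ((x.den : ZMod m))⁻¹ * ((y.den : ZMod m))⁻¹ := by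
    push_cast
    exact zinv_mul _ _ hx hy
  rw [hmulinv]
  have h1 := ZMod.mul_inv_of_unit _ hx
  have h2 := ZMod.mul_inv_of_unit _ hy
  show _ = (x.num : ZMod m) * (x.den : ZMod m)⁻¹ + (y.num : ZMod m) * (y.den : ZMod m)⁻¹
  push_cast
  linear_combination ((x.num : ZMod m) * ((x.den : ZMod m))⁻¹) * h2
    + ((y.num : ZMod m) * ((y.den : ZMod m))⁻¹) * h1

lemma e_neg (x : ℚ) : IsUnit (((-x).den : ZMod m)) ↔ IsUnit ((x.den : ZMod m)) := by
  rw [Rat.neg_den]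

lemma e_neg' (x : ℚ) : e m (-x) = - e m x := by
  simp [e, Rat.neg_den, Rat.neg_num, neg_mul]

lemma e_sub (x y : ℚ) (hx : IsUnit ((x.den : ZMod m))) (hy : IsUnit ((y.den : ZMod m))) :
    IsUnit (((x - y).den : ZMod m)) ∧ e m (x - y) = e m x - e m y := by
  rw [sub_eq_add_neg]
  obtain ⟨hu, hv⟩ := e_add x (-y) hx (by rw [Rat.neg_den]; exact hy)
  refine ⟨hu, ?_⟩
  rw [hv, e_neg']; ring

lemma e_int_mul (n : ℤ) (x : ℚ) (hx : IsUnit ((x.den : ZMod m))) :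
    IsUnit ((((n : ℚ) * x).den : ZMod m)) ∧ e m ((n : ℚ) * x) = (n : ZMod m) * e m x := by
  have hx0 : (x.den : ℚ) ≠ 0 := by exact_mod_cast x.den_ne_zero
  have hxy : (n : ℚ) * x = ((n * x.num : ℤ) : ℚ) / (((x.den : ℤ)) : ℚ) := by
    conv_lhs => rw [← Rat.num_div_den x]
    push_cast; ring
  have hbu : IsUnit (((x.den : ℤ)) : ZMod m) := by push_cast; exact hx
  obtain ⟨hu, hv⟩ := e_pack ((n:ℚ) * x) (n * x.num) ((x.den : ℤ))
    (by exact_mod_cast x.den_ne_zero) hbu hxy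
  refine ⟨hu, ?_⟩
  rw [hv]; show _ = _ * ((x.num : ZMod m) * (x.den : ZMod m)⁻¹)
  push_cast; ring

lemma e_sum {ι : Type*} (s : Finset ι) (f : ι → ℚ)
    (h : ∀ i ∈ s, IsUnit (((f i).den : ZMod m))) :
    IsUnit (((∑ i ∈ s, f i).den : ZMod m)) ∧ e m (∑ i ∈ s, f i) = ∑ i ∈ s, e m (f i) := by
  classical
  induction s using Finset.cons_induction with
  | empty => simp [e]
  | cons a s ha ih =>
    have h1 : IsUnit (((f a).den : ZMod m)) := h a (Finset.mem_cons_self a s)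
    obtain ⟨hu, hv⟩ := ih (fun i hi => h i (Finset.mem_cons_of_mem hi))
    rw [Finset.sum_cons, Finset.sum_cons]
    obtain ⟨hu2, hv2⟩ := e_add (f a) _ h1 hu
    exact ⟨hu2, by rw [hv2, hv]⟩

lemma ratModEq_of_e_eq (x y : ℚ) (hx : IsUnit ((x.den : ZMod m)))
    (hy : IsUnit ((y.den : ZMod m))) (h : e m x = e m y) : ratModEq m x y := by
  obtain ⟨hu, hv⟩ := e_sub x y hx hy
  rw [h, sub_self] at hv
  have hd := ZMod.mul_inv_of_unit _ hu
  have hnum : (((x - y).num : ℤ) : ZMod m) = 0 := by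
    have : ((x - y).num : ZMod m) * (((x-y).den : ZMod m) * ((x-y).den : ZMod m)⁻¹)
        = e m (x - y) * ((x-y).den : ZMod m) := by
      show _ = (((x-y).num : ZMod m) * ((x-y).den : ZMod m)⁻¹) * _
      ring
    rw [hd, hv, mul_one, zero_mul] at this
    exact this
  rw [ratModEq]
  exact_mod_cast (ZMod.intCast_zmod_eq_zero_iff_dvd _ m).mp hnum

end FQaux
open Finset
section
variable (p : ℕ)


lemma unit_k (hp : p.Prime) {k : ℕ} (h1 : 1 ≤ k) (h2 : k < p) :
    IsUnit ((k : ZMod (p^2))) := by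
  rw [ZMod.isUnit_iff_coprime]
  apply Nat.Coprime.pow_right
  rw [Nat.coprime_comm]
  exact (Nat.Prime.coprime_iff_not_dvd hp).mpr
    (fun hd => absurd (Nat.le_of_dvd h1 hd) (by omega))

lemma hpi2 : ((p : ZMod (p^2)))^2 = 0 := by
  have h := ZMod.natCast_self (p^2)
  push_cast at h
  exact h

lemma choose_cast (hp : p.Prime) :
    ∀ k, k ≤ p - 1 → (((p-1).choose k : ℕ) : ZMod (p^2)) =
      (-1)^k * (1 - p * ∑ j ∈ Icc 1 k, ((j : ZMod (p^2)))⁻¹) := by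
  have hp2 := hp.two_le
  intro k
  induction k with
  | zero => intro _; simp
  | succ k ih =>
    intro hk1
    have ihk := ih (by omega)
    have hku : IsUnit (((k+1 : ℕ)) : ZMod (p^2)) := unit_k p hp (by omega) (by omega)
    have hu := ZMod.mul_inv_of_unit _ hku
    have hcast : (((p-1) - k : ℕ) : ZMod (p^2)) = (p : ZMod (p^2)) - 1 - k := by
      have h1 : k ≤ p - 1 := by omega
      rw [Nat.cast_sub h1, Nat.cast_sub (by omega : 1 ≤ p)]
      push_cast; ring
    have hrecZ : (((p-1).choose (k+1) : ℕ) : ZMod (p^2)) * ((k+1 : ℕ) : ZMod (p^2))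
        = (((p-1).choose k : ℕ) : ZMod (p^2)) * ((((p-1) - k : ℕ)) : ZMod (p^2)) := by
      exact_mod_cast congrArg (Nat.cast : ℕ → ZMod (p^2)) (Nat.choose_succ_right_eq (p-1) k)
    refine IsUnit.mul_right_cancel hku ?_
    rw [hrecZ, ihk, hcast, Finset.sum_Icc_succ_top (by omega : 1 ≤ k + 1)]
    have hpi := hpi2 p
    push_cast at hu ⊢
    linear_combination (-(-1 : ZMod (p^2))^k * (∑ j ∈ Icc 1 k, ((j : ZMod (p^2)))⁻¹)) * hpi
      + (-(-1 : ZMod (p^2))^k * (p : ZMod (p^2))) * hu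
end
open Finset

lemma binom_neg2 (N : ℕ) : ∑ k ∈ Icc 1 N, ((N.choose k : ℚ)) * (-2)^k = (-1)^N - 1 := by
  have h := add_pow (-2 : ℚ) 1 N
  rw [show (-2 : ℚ) + 1 = -1 by norm_num] at h
  simp only [one_pow, mul_one] at h
  rw [Finset.range_eq_Ico, Finset.sum_eq_sum_Ico_succ_bot (Nat.succ_pos N)] at h
  rw [← Finset.Ico_add_one_right_eq_Icc] at *
  have : ∑ k ∈ Ico 1 (N+1), ((N.choose k : ℚ)) * (-2)^k
      = ∑ k ∈ Ico 1 (N+1), (-2:ℚ)^k * (N.choose k) := by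
    apply Finset.sum_congr rfl; intro k _; ring
  rw [this]
  simp only [pow_zero, Nat.choose_zero_right, Nat.cast_one, one_mul] at h
  linarith [h]

lemma I1 (M : ℕ) : ∑ k ∈ Icc 1 M, (M.choose k : ℚ) * (-2)^k / k
    = ∑ m ∈ Icc 1 M, ((-1 : ℚ)^m - 1)/(m : ℚ) := by
  induction M with
  | zero => simp
  | succ M ih =>
    rw [show ∑ m ∈ Icc 1 (M+1), ((-1:ℚ)^m - 1)/(m:ℚ)
        = (∑ m ∈ Icc 1 M, ((-1:ℚ)^m - 1)/(m:ℚ)) + ((-1:ℚ)^(M+1) - 1)/((M+1 : ℕ):ℚ)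
        from Finset.sum_Icc_succ_top (by omega : 1 ≤ M + 1) _, ← ih]
    -- Pascal split on the left
    have hsplit : ∑ k ∈ Icc 1 (M+1), ((M+1).choose k : ℚ) * (-2)^k / k
        = (∑ k ∈ Icc 1 (M+1), (M.choose (k-1) : ℚ) * (-2)^k / k)
          + ∑ k ∈ Icc 1 (M+1), (M.choose k : ℚ) * (-2)^k / k := by
      rw [← Finset.sum_add_distrib]
      apply Finset.sum_congr rfl
      intro k hk
      rw [Finset.mem_Icc] at hk
      obtain ⟨j, rfl⟩ : ∃ j, k = j + 1 := ⟨k - 1, by omega⟩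
      rw [Nat.choose_succ_succ]
      push_cast
      ring
    rw [hsplit]
    have htail : ∑ k ∈ Icc 1 (M+1), (M.choose k : ℚ) * (-2)^k / k
        = ∑ k ∈ Icc 1 M, (M.choose k : ℚ) * (-2)^k / k := by
      rw [Finset.sum_Icc_succ_top (by omega : 1 ≤ M + 1)]
      simp [Nat.choose_succ_self]
    have hhead : ∑ k ∈ Icc 1 (M+1), (M.choose (k-1) : ℚ) * (-2)^k / k
        = ((-1)^(M+1) - 1) / (M+1) := by
      have hterm : ∀ k ∈ Icc 1 (M+1), (M.choose (k-1) : ℚ) * (-2)^k / k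
          = ((M+1).choose k : ℚ) * (-2)^k / (M+1) := by
        intro k hk
        rw [Finset.mem_Icc] at hk
        obtain ⟨j, rfl⟩ : ∃ j, k = j + 1 := ⟨k - 1, by omega⟩
        have hrec : (M+1) * M.choose j = (M+1).choose (j+1) * (j+1) :=
          Nat.add_one_mul_choose_eq M j
        have hrecQ : ((M:ℚ)+1) * (M.choose j : ℚ) = ((M+1).choose (j+1) : ℚ) * (j+1) := by
          exact_mod_cast congrArg (Nat.cast : ℕ → ℚ) hrec
        have hj0 : ((j:ℚ)+1) ≠ 0 := by positivity
        have hM0 : ((M:ℚ)+1) ≠ 0 := by positivity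
        field_simp
        push_cast
        linear_combination hrecQ
      rw [Finset.sum_congr rfl hterm, ← Finset.sum_div]
      rw [show ∑ k ∈ Icc 1 (M+1), (((M+1).choose k : ℚ)) * (-2)^k
          = (-1)^(M+1) - 1 from binom_neg2 (M+1)]
    rw [htail, hhead]
    have hM0 : ((M:ℚ)+1) ≠ 0 := by positivity
    push_cast
    field_simp
    ring

theorem fermat_quotient_mod_p_squared' (p : ℕ) (hp : p.Prime) (hodd : Odd p) :
    ratModEq (p ^ 2) ((2 ^ (p - 1) - 1 : ℚ) / p)
      ((∑ r ∈ (Finset.Icc 1 (p - 1)).filter (fun r => Odd r), (1 : ℚ) / r) -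
        p * ∑ r ∈ Finset.Icc 1 (p - 1), (2 : ℚ) ^ (r - 1) / (r : ℚ) ^ 2) := by
  classical
  obtain ⟨n, rfl⟩ : ∃ n, p = n + 1 := ⟨p - 1, by have := hp.pos; omega⟩
  have hp2 := hp.two_le
  have hodd' : (n+1) % 2 = 1 := Nat.odd_iff.mp hodd
  have hpne2 : n + 1 ≠ 2 := by omega
  have hn1 : 1 ≤ n := by omega
  simp only [Nat.add_sub_cancel]
  haveI := Fact.mk hp
  -- Fermat's little theorem and the two integer quotients
  have hdvd : ((n+1 : ℕ) : ℤ) ∣ 2^(n+1) - 2 := by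
    have h := ZMod.pow_card (2 : ZMod (n+1))
    have h0 : ((2^(n+1) - 2 : ℤ) : ZMod (n+1)) = 0 := by push_cast; rw [h]; ring
    exact (ZMod.intCast_zmod_eq_zero_iff_dvd _ (n+1)).mp h0
  obtain ⟨q2, hq2⟩ := hdvd
  have hmul2 : (2:ℤ)^(n+1) - 2 = 2 * (2^n - 1) := by rw [pow_succ]; ring
  have hdvdQ : ((n+1:ℕ):ℤ) ∣ 2^n - 1 := by
    have hprime : Prime ((n+1 : ℕ) : ℤ) := Nat.prime_iff_prime_int.mp hp
    have hd : ((n+1:ℕ):ℤ) ∣ 2 * (2^n - 1) := by rw [← hmul2]; exact ⟨q2, hq2⟩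
    rcases hprime.dvd_mul.mp hd with h | h
    · exfalso
      have h2 : (n+1:ℕ) ∣ 2 :=
        Int.natCast_dvd_natCast.mp (by exact_mod_cast h : ((n+1:ℕ):ℤ) ∣ ((2:ℕ):ℤ))
      have := Nat.le_of_dvd (by norm_num) h2
      omega
    · exact h
  obtain ⟨Q, hQ⟩ := hdvdQ
  have h2Q : 2 * Q = q2 := by
    have hne : ((n+1:ℕ):ℤ) ≠ 0 := by positivity
    apply mul_left_cancel₀ hne
    rw [← hq2, hmul2, hQ]; ring
  -- units in ZMod ((n+1)^2)
  have huk : ∀ k : ℕ, 1 ≤ k → k ≤ n → IsUnit ((k : ZMod ((n+1)^2))) :=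
    fun k h1 h2 => unit_k (n+1) hp h1 (by omega)
  have hu2 : IsUnit ((2 : ZMod ((n+1)^2))) := by
    have h2 : ((2:ℕ) : ZMod ((n+1)^2)) = 2 := by norm_cast
    rw [← h2, ZMod.isUnit_iff_coprime]
    apply Nat.Coprime.pow_right
    refine (Nat.prime_two.coprime_iff_not_dvd).mpr ?_
    rintro ⟨t, ht⟩
    omega
  have hpi := hpi2 (n+1)
  -- the left-hand side is the integer Q
  have hXQ : (2 ^ n - 1 : ℚ)/((n+1 : ℕ) : ℚ) = ((Q:ℤ):ℚ) := by
    have hQQ : (2:ℚ)^n - 1 = ((n+1:ℕ):ℚ) * (Q:ℚ) := by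
      exact_mod_cast congrArg (Int.cast : ℤ → ℚ) hQ
    rw [div_eq_iff (by positivity : ((n+1:ℕ):ℚ) ≠ 0), hQQ]; ring
  have heX : FQaux.e ((n+1)^2) ((2 ^ n - 1 : ℚ)/((n+1 : ℕ):ℚ)) = ((Q:ℤ) : ZMod ((n+1)^2)) := by
    rw [hXQ, FQaux.e_intCast]
  have hXden : IsUnit ((((2 ^ n - 1 : ℚ)/((n+1 : ℕ):ℚ)).den : ZMod ((n+1)^2))) := by
    rw [hXQ, Rat.den_intCast]
    simp
  -- e of the odd-harmonic sum S1
  have hS1terms : ∀ r ∈ (Finset.Icc 1 n).filter (fun r => Odd r),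
      IsUnit ((((1:ℚ)/(r:ℚ)).den : ZMod ((n+1)^2))) ∧
      FQaux.e ((n+1)^2) ((1:ℚ)/(r:ℚ)) = ((r : ZMod ((n+1)^2)))⁻¹ := by
    intro r hr
    rw [Finset.mem_filter, Finset.mem_Icc] at hr
    have hru : IsUnit ((r : ZMod ((n+1)^2))) := huk r hr.1.1 hr.1.2
    have hru' : IsUnit (((r:ℤ) : ZMod ((n+1)^2))) := by push_cast; exact hru
    obtain ⟨hu, hv⟩ := FQaux.e_pack ((1:ℚ)/(r:ℚ)) 1 (r:ℤ)
      (Int.natCast_ne_zero.mpr (by omega)) hru' (by push_cast; ring)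
    refine ⟨hu, ?_⟩
    rw [hv]
    push_cast
    ring
  obtain ⟨hS1den, hS1e⟩ := FQaux.e_sum ((Finset.Icc 1 n).filter (fun r => Odd r))
    (fun r => (1:ℚ)/(r:ℚ)) (fun r hr => (hS1terms r hr).1)
  have hS1e' : FQaux.e ((n+1)^2) (∑ r ∈ (Finset.Icc 1 n).filter (fun r => Odd r), (1:ℚ)/(r:ℚ))
      = ∑ r ∈ (Finset.Icc 1 n).filter (fun r => Odd r), ((r : ZMod ((n+1)^2)))⁻¹ := by
    rw [hS1e]
    exact Finset.sum_congr rfl (fun r hr => (hS1terms r hr).2)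
  -- e of the sum S2
  have hS2terms : ∀ r ∈ Finset.Icc 1 n,
      IsUnit ((((2:ℚ)^(r-1)/(r:ℚ)^2).den : ZMod ((n+1)^2))) ∧
      FQaux.e ((n+1)^2) ((2:ℚ)^(r-1)/(r:ℚ)^2)
        = (2 : ZMod ((n+1)^2))^(r-1) * (((r : ZMod ((n+1)^2)))⁻¹)^2 := by
    intro r hr
    rw [Finset.mem_Icc] at hr
    have hru := huk r hr.1 hr.2
    have hr0 : ((r:ℤ)^2) ≠ 0 := pow_ne_zero _ (Int.natCast_ne_zero.mpr (by omega))
    have hbu : IsUnit ((((r:ℤ)^2 : ℤ)) : ZMod ((n+1)^2)) := by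
      push_cast; exact hru.pow 2
    obtain ⟨hu, hv⟩ := FQaux.e_pack ((2:ℚ)^(r-1)/(r:ℚ)^2) (2^(r-1)) ((r:ℤ)^2) hr0 hbu
      (by push_cast; ring)
    refine ⟨hu, ?_⟩
    rw [hv]
    have hcast : ((((r:ℤ)^2 : ℤ)) : ZMod ((n+1)^2)) = ((r : ZMod ((n+1)^2)))^2 := by
      push_cast; ring
    rw [hcast, FQaux.zinv_sq _ hru]
    push_cast
    ring
  obtain ⟨hS2den, hS2e⟩ := FQaux.e_sum (Finset.Icc 1 n)
    (fun r => (2:ℚ)^(r-1)/(r:ℚ)^2) (fun r hr => (hS2terms r hr).1)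
  have hS2e' : FQaux.e ((n+1)^2) (∑ r ∈ Finset.Icc 1 n, (2:ℚ)^(r-1)/(r:ℚ)^2)
      = ∑ r ∈ Finset.Icc 1 n, (2 : ZMod ((n+1)^2))^(r-1) * (((r : ZMod ((n+1)^2)))⁻¹)^2 := by
    rw [hS2e]
    exact Finset.sum_congr rfl (fun r hr => (hS2terms r hr).2)
  -- e of p * S2
  obtain ⟨hpS2den, hpS2e⟩ := FQaux.e_int_mul ((n+1:ℕ):ℤ)
    (∑ r ∈ Finset.Icc 1 n, (2:ℚ)^(r-1)/(r:ℚ)^2) hS2den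
  -- rewrite the ℕ-coercion of p into the ℤ-coercion form
  have hcoe : ((n+1:ℕ):ℚ) = (((n+1:ℕ):ℤ):ℚ) := by push_cast; ring
  rw [← hcoe] at hpS2den hpS2e
  -- e of Y
  obtain ⟨hYden, hYe⟩ := FQaux.e_sub
    (∑ r ∈ (Finset.Icc 1 n).filter (fun r => Odd r), (1:ℚ)/(r:ℚ))
    (((n+1:ℕ):ℚ) * ∑ r ∈ Finset.Icc 1 n, (2:ℚ)^(r-1)/(r:ℚ)^2)
    hS1den hpS2den
  -- the key ℚ identity
  have hI := I1 (n+1)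
  rw [Finset.sum_Icc_succ_top (by omega : 1 ≤ n+1), Finset.sum_Icc_succ_top (by omega : 1 ≤ n+1)] at hI
  simp only [Nat.choose_self, Nat.cast_one, one_mul] at hI
  rw [Odd.neg_pow hodd (2:ℚ), Odd.neg_pow hodd (1:ℚ)] at hI
  have hS1alt : ∑ m ∈ Finset.Icc 1 n, ((-1:ℚ)^m - 1)/(m:ℚ)
      = -2 * ∑ r ∈ (Finset.Icc 1 n).filter (fun r => Odd r), (1:ℚ)/(r:ℚ) := by
    rw [Finset.mul_sum, Finset.sum_filter]
    apply Finset.sum_congr rfl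
    intro m hm
    rw [Finset.mem_Icc] at hm
    have hm0 : (m:ℚ) ≠ 0 := Nat.cast_ne_zero.mpr (by omega)
    by_cases h : Odd m
    · rw [if_pos h, Odd.neg_one_pow h]
      ring
    · rw [if_neg h, Even.neg_one_pow (Nat.not_odd_iff_even.mp h)]
      simp
  have hq2Q : (2:ℚ)^(n+1) - 2 = ((n+1:ℕ):ℚ) * (q2:ℚ) := by
    exact_mod_cast congrArg (Int.cast : ℤ → ℚ) hq2
  have key : ∑ k ∈ Finset.Icc 1 n, ((n+1).choose k : ℚ) * (-2)^k / (k:ℚ)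
      = ((q2:ℤ):ℚ) - 2 * ∑ r ∈ (Finset.Icc 1 n).filter (fun r => Odd r), (1:ℚ)/(r:ℚ) := by
    have hne : ((n+1:ℕ):ℚ) ≠ 0 := by positivity
    have hne' : ((n+1:ℚ)) ≠ 0 := by positivity
    have hinv : ((n:ℚ)+1) * ((n:ℚ)+1)⁻¹ = 1 := mul_inv_cancel₀ (by positivity)
    push_cast at hI hq2Q ⊢
    linear_combination hI + hS1alt + (1/((n:ℚ)+1)) * hq2Q + (q2:ℚ) * hinv
  -- e of the key identity, term by term
  have hKterms : ∀ k ∈ Finset.Icc 1 n,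
      IsUnit (((((n+1).choose k : ℚ) * (-2)^k / (k:ℚ)).den : ZMod ((n+1)^2))) ∧
      FQaux.e ((n+1)^2) (((n+1).choose k : ℚ) * (-2)^k / (k:ℚ))
        = -2 * ((n+1:ℕ) : ZMod ((n+1)^2)) *
            ((2 : ZMod ((n+1)^2))^(k-1) * (((k : ZMod ((n+1)^2)))⁻¹)^2) := by
    intro k hk
    rw [Finset.mem_Icc] at hk
    obtain ⟨j, rfl⟩ : ∃ j, k = j + 1 := ⟨k - 1, by omega⟩
    have hku := huk (j+1) (by omega) hk.2
    have hau := ZMod.mul_inv_of_unit _ hku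
    have hx : ((n+1).choose (j+1) : ℚ) * (-2)^(j+1) / ((j+1 : ℕ):ℚ)
        = ((((n+1).choose (j+1) : ℤ) * (-2)^(j+1) : ℤ) : ℚ) / (((j+1 : ℕ) : ℤ) : ℚ) := by
      push_cast; ring
    have hb0 : ((j+1:ℕ):ℤ) ≠ 0 := by positivity
    have hbu : IsUnit ((((j+1:ℕ):ℤ)) : ZMod ((n+1)^2)) := by push_cast; exact_mod_cast hku
    obtain ⟨hu, hv⟩ := FQaux.e_pack _ _ _ hb0 hbu hx
    refine ⟨hu, ?_⟩
    rw [hv]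
    obtain ⟨c, hc⟩ := hp.dvd_choose_self (by omega : j + 1 ≠ 0) (by omega : j + 1 < n + 1)
    have hrec : (n+1) * n.choose j = (n+1).choose (j+1) * (j+1) := Nat.add_one_mul_choose_eq n j
    have hcj : c * (j+1) = n.choose j := by
      have h' : (n+1) * (c * (j+1)) = (n+1) * n.choose j := by
        rw [show (n+1) * (c * (j+1)) = ((n+1) * c) * (j+1) by ring, ← hc, ← hrec]
      exact Nat.eq_of_mul_eq_mul_left (by omega) h'
    have hcR : (c : ZMod ((n+1)^2))
        = ((n.choose j : ℕ) : ZMod ((n+1)^2)) * (((j+1:ℕ)) : ZMod ((n+1)^2))⁻¹ := by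
      refine IsUnit.mul_right_cancel hku ?_
      have hcast := congrArg (Nat.cast : ℕ → ZMod ((n+1)^2)) hcj
      push_cast at hcast hau ⊢
      linear_combination hcast - (n.choose j : ZMod ((n+1)^2)) * hau
    have hL1 := choose_cast (n+1) hp j (by omega)
    simp only [Nat.add_sub_cancel] at hL1
    have hchoose : (((n+1).choose (j+1) : ℕ) : ZMod ((n+1)^2))
        = ((n+1:ℕ) : ZMod ((n+1)^2)) * (c : ZMod ((n+1)^2)) := by
      exact_mod_cast congrArg (Nat.cast : ℕ → ZMod ((n+1)^2)) hc
    have hsign : ((-1 : ZMod ((n+1)^2)))^j * (-2 : ZMod ((n+1)^2))^j = 2^j := by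
      rw [← mul_pow]; norm_num
    simp only [Nat.add_sub_cancel]
    push_cast [hchoose, hcR, hL1] at *
    push_cast at hpi hau
    linear_combination (-(-1 : ZMod ((n+1)^2))^j * (∑ x ∈ Finset.Icc 1 j, ((x : ZMod ((n+1)^2)))⁻¹)
        * (-2 : ZMod ((n+1)^2))^(j+1) * (((j:ZMod ((n+1)^2))+1)⁻¹)^2) * hpi
      + (-2 * ((n:ZMod ((n+1)^2))+1) * (((j:ZMod ((n+1)^2))+1)⁻¹)^2) * hsign
  -- e of the key sum
  obtain ⟨hKden, hKe⟩ := FQaux.e_sum (Finset.Icc 1 n)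
    (fun k => ((n+1).choose k : ℚ) * (-2)^k / (k:ℚ)) (fun k hk => (hKterms k hk).1)
  have hKe' : FQaux.e ((n+1)^2) (∑ k ∈ Finset.Icc 1 n, ((n+1).choose k : ℚ) * (-2)^k / (k:ℚ))
      = -2 * ((n+1:ℕ) : ZMod ((n+1)^2)) *
          ∑ k ∈ Finset.Icc 1 n, (2 : ZMod ((n+1)^2))^(k-1) * (((k : ZMod ((n+1)^2)))⁻¹)^2 := by
    rw [hKe, Finset.sum_congr rfl (fun k hk => (hKterms k hk).2), ← Finset.mul_sum]
  -- e of the right-hand side of the key identity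
  obtain ⟨h2S1den, h2S1e⟩ := FQaux.e_int_mul 2
    (∑ r ∈ (Finset.Icc 1 n).filter (fun r => Odd r), (1:ℚ)/(r:ℚ)) hS1den
  rw [show ((2:ℤ):ℚ) = (2:ℚ) by norm_num] at h2S1den h2S1e
  have hq2den : IsUnit (((((q2:ℤ):ℚ)).den : ZMod ((n+1)^2))) := by
    rw [Rat.den_intCast]; simp
  have hEkey := congrArg (FQaux.e ((n+1)^2)) key
  rw [hKe', (FQaux.e_sub _ _ hq2den h2S1den).2, FQaux.e_intCast, h2S1e, hS1e'] at hEkey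
  -- final assembly
  refine FQaux.ratModEq_of_e_eq _ _ hXden hYden ?_
  rw [heX, hYe, hpS2e, hS1e', hS2e']
  refine IsUnit.mul_left_cancel hu2 ?_
  have hq2R : ((q2:ℤ) : ZMod ((n+1)^2)) = 2 * ((Q:ℤ) : ZMod ((n+1)^2)) := by
    exact_mod_cast congrArg (Int.cast : ℤ → ZMod ((n+1)^2)) h2Q.symm
  push_cast at hEkey hq2R ⊢
  linear_combination (-1 : ZMod ((n+1)^2)) * hEkey - hq2R
end

section
/- Let r and n be positive integers and let q be a rational number. Then ∑_{k=0}^{n} H_k^{(r)} · binomial(n, k) · (1-q)^k · q^(n-k) = H_n^{(r)} − ∑_{j=1}^{n} ( ∑_{l=0}^{j-1} (-1)^(j-l-1) · binomial(n-l-1, n-j) · binomial(n, l) · 1/(n-l)^(r-1) ) · q^j / j. -/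
/-- `harmonic' r k` is the `k`-th harmonic number of order `r`, i.e. `∑_{i=1}^k 1/i^r`. -/
def harmonic' (r k : ℕ) : ℚ := ∑ i ∈ Finset.Icc 1 k, 1 / (i : ℚ) ^ r

open Finset

/-- Partial alternating sum of binomial coefficients. -/
lemma alt_partial (j : ℕ) (hj : 1 ≤ j) (s : ℕ) :
    ∑ m ∈ range (s+1), (-1:ℚ)^m * (j.choose m) = (-1)^s * ((j-1).choose s) := by
  induction s with
  | zero => simp
  | succ s ih =>
    rw [Finset.sum_range_succ, ih]
    obtain ⟨j', rfl⟩ : ∃ j', j = j' + 1 := ⟨j - 1, by omega⟩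
    simp only [Nat.add_sub_cancel, Nat.choose_succ_succ j' s]
    push_cast
    ring

/-- Key binomial identity. -/
lemma key_binom (n i s : ℕ) (h1 : 1 ≤ i) (hin : i ≤ n) (hs : s < i) :
    ((n-i+1+s : ℕ) : ℚ) * ((n-i+s).choose s) * (n.choose (n-i+1+s))
      = (i : ℚ) * ((i-1).choose s) * (n.choose i) := by
  have h2 : s ≤ n - i + s := by omega
  have h3 : n - i + 1 + s ≤ n := by omega
  have h4 : s ≤ i - 1 := by omega
  rw [Nat.cast_choose ℚ h2, Nat.cast_choose ℚ h3, Nat.cast_choose ℚ h4,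
    Nat.cast_choose ℚ hin]
  have e1 : n - i + s - s = n - i := by omega
  have e2 : n - (n - i + 1 + s) = i - 1 - s := by omega
  have e3 : i - 1 - (s) = i - 1 - s := rfl
  rw [e1, e2]
  have f1 : Nat.factorial (n - i + 1 + s) = (n - i + 1 + s) * Nat.factorial (n - i + s) := by
    rw [show n - i + 1 + s = (n - i + s) + 1 by omega, Nat.factorial_succ]
  have f2 : Nat.factorial i = i * Nat.factorial (i - 1) := by
    rw [show i = (i - 1) + 1 by omega, Nat.factorial_succ]
    congr 1 <;> omega
  rw [f1, f2]
  have p1 : (Nat.factorial (n - i + s) : ℚ) ≠ 0 := by positivity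
  have p2 : (Nat.factorial s : ℚ) ≠ 0 := by positivity
  have p3 : (Nat.factorial (n - i) : ℚ) ≠ 0 := by positivity
  have p4 : (Nat.factorial (i - 1 - s) : ℚ) ≠ 0 := by positivity
  have p5 : (Nat.factorial (i - 1) : ℚ) ≠ 0 := by positivity
  have p6 : ((n - i + 1 + s) : ℚ) ≠ 0 := by
    have : (0:ℕ) < n - i + 1 + s := by omega
    exact_mod_cast this.ne'
  have p7 : (i : ℚ) ≠ 0 := by
    exact_mod_cast h1.trans_lt' (by omega : (0:ℕ) < 1) |>.ne'
  push_cast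
  field_simp

/-- Expansion of the partial binomial sum in powers of `q`. -/
lemma partial_binom (n i : ℕ) (h1 : 1 ≤ i) (hin : i ≤ n) (q : ℚ) :
    ∑ k ∈ range i, (n.choose k : ℚ) * (1-q)^k * q^(n-k)
      = ∑ s ∈ range i,
          (-1:ℚ)^s * ((n-i+s).choose s) * (n.choose (n-i+1+s)) * q^(n-i+1+s) := by
  have step1 : ∀ k ∈ range i, (n.choose k : ℚ) * (1-q)^k * q^(n-k)
      = ∑ t ∈ range (k+1), (-1:ℚ)^t * (n.choose k) * (k.choose t) * q^(n-k+t) := by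
    intro k hk
    have hq : (1 - q)^k = ∑ t ∈ range (k+1), (-q)^t * 1^(k-t) * (k.choose t) := by
      rw [← add_pow]; ring_nf
    rw [hq, Finset.mul_sum, Finset.sum_mul]
    refine Finset.sum_congr rfl fun t ht => ?_
    rw [pow_add, neg_pow]
    ring
  rw [Finset.sum_congr rfl step1]
  have step2 : ∑ k ∈ range i, ∑ t ∈ range (k+1),
        (-1:ℚ)^t * (n.choose k) * (k.choose t) * q^(n-k+t)
      = ∑ d ∈ range i, ∑ t ∈ range (i-d),
        (-1:ℚ)^t * (n.choose d) * ((n-d).choose t) * q^(n-d) := by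
    rw [Finset.sum_sigma', Finset.sum_sigma']
    refine Finset.sum_nbij' (fun x => ⟨x.1 - x.2, x.2⟩) (fun x => ⟨x.1 + x.2, x.2⟩)
      ?_ ?_ ?_ ?_ ?_
    · rintro ⟨k, t⟩ hm
      simp only [Finset.mem_sigma, Finset.mem_range] at hm ⊢
      omega
    · rintro ⟨d, t⟩ hm
      simp only [Finset.mem_sigma, Finset.mem_range] at hm ⊢
      omega
    · rintro ⟨k, t⟩ hm
      simp only [Finset.mem_sigma, Finset.mem_range] at hm
      dsimp only
      have h : k - t + t = k := by omega
      rw [h]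
    · rintro ⟨d, t⟩ hm
      simp only [Finset.mem_sigma, Finset.mem_range] at hm
      dsimp only
      have h : d + t - t = d := by omega
      rw [h]
    · rintro ⟨k, t⟩ hm
      simp only [Finset.mem_sigma, Finset.mem_range] at hm
      obtain ⟨hk, ht⟩ := hm
      have ht' : t ≤ k := by omega
      have hkn : k ≤ n := by omega
      dsimp only
      have hnat : n.choose k * k.choose t = n.choose (k - t) * ((n - (k - t)).choose t) := by
        have e : k - (k - t) = t := by omega
        have h := Nat.choose_mul (n := n) (Nat.sub_le k t)
        rw [Nat.choose_symm ht', e] at h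
        exact h
      have hcc : (n.choose k : ℚ) * (k.choose t) = (n.choose (k-t)) * ((n-(k-t)).choose t) := by
        exact_mod_cast hnat
      have hexp : n - k + t = n - (k - t) := by omega
      rw [hexp]
      calc (-1:ℚ)^t * (n.choose k) * (k.choose t) * q^(n-(k-t))
          = ((n.choose k : ℚ) * (k.choose t)) * ((-1:ℚ)^t * q^(n-(k-t))) := by ring
        _ = ((n.choose (k-t) : ℚ) * ((n-(k-t)).choose t)) * ((-1:ℚ)^t * q^(n-(k-t))) := by
            rw [hcc]
        _ = (-1:ℚ)^t * (n.choose (k-t)) * ((n-(k-t)).choose t) * q^(n-(k-t)) := by ring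
  rw [step2]
  have step3 : ∀ d ∈ range i, ∑ t ∈ range (i-d),
        (-1:ℚ)^t * (n.choose d) * ((n-d).choose t) * q^(n-d)
      = (-1:ℚ)^(i-d-1) * (n.choose d) * ((n-d-1).choose (i-d-1)) * q^(n-d) := by
    intro d hd
    rw [Finset.mem_range] at hd
    have hr : i - d = (i - d - 1) + 1 := by omega
    have halt := alt_partial (n - d) (by omega) (i - d - 1)
    calc ∑ t ∈ range (i-d), (-1:ℚ)^t * (n.choose d) * ((n-d).choose t) * q^(n-d)
        = (∑ t ∈ range ((i-d-1)+1), (-1:ℚ)^t * ((n-d).choose t))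
            * ((n.choose d : ℚ) * q^(n-d)) := by
          rw [← hr, Finset.sum_mul]
          exact Finset.sum_congr rfl fun t ht => by ring
      _ = ((-1:ℚ)^(i-d-1) * ((n-d-1).choose (i-d-1))) * ((n.choose d : ℚ) * q^(n-d)) := by
          rw [halt]
      _ = (-1:ℚ)^(i-d-1) * (n.choose d) * ((n-d-1).choose (i-d-1)) * q^(n-d) := by ring
  rw [Finset.sum_congr rfl step3]
  refine Finset.sum_nbij' (fun d => i - 1 - d) (fun s => i - 1 - s) ?_ ?_ ?_ ?_ ?_
  · intro d hd; rw [Finset.mem_range] at hd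
    show i - 1 - d ∈ range i
    rw [Finset.mem_range]; omega
  · intro s hs; rw [Finset.mem_range] at hs
    show i - 1 - s ∈ range i
    rw [Finset.mem_range]; omega
  · intro d hd; rw [Finset.mem_range] at hd
    show i - 1 - (i - 1 - d) = d
    omega
  · intro s hs; rw [Finset.mem_range] at hs
    show i - 1 - (i - 1 - s) = s
    omega
  · intro d hd
    rw [Finset.mem_range] at hd
    have e1 : i - d - 1 = i - 1 - d := by omega
    have e2 : n - d - 1 = n - i + (i - 1 - d) := by omega
    have e3 : n - d = n - i + 1 + (i - 1 - d) := by omega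
    have e4 : n.choose d = n.choose (n - i + 1 + (i - 1 - d)) := by
      rw [← Nat.choose_symm (show n - i + 1 + (i - 1 - d) ≤ n by omega)]
      congr 1
      omega
    rw [e1, e2, e4, e3]
    ring


theorem binomial_sum_higher_harmonic (r n : ℕ) (hr : 0 < r) (hn : 0 < n) (q : ℚ) :
    ∑ k ∈ Finset.range (n + 1),
        harmonic' r k * (n.choose k : ℚ) * (1 - q) ^ k * q ^ (n - k) =
      harmonic' r n -
        ∑ j ∈ Finset.Icc 1 n,
          (∑ l ∈ Finset.range j,
              (-1 : ℚ) ^ (j - l - 1) * ((n - l - 1).choose (n - j) : ℚ) *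
                (n.choose l : ℚ) * (1 / ((n - l : ℕ) : ℚ) ^ (r - 1))) *
            q ^ j / (j : ℚ) := by
  -- Step 1: swap the harmonic sum to the outside
  have lhs1 : ∑ k ∈ range (n+1), harmonic' r k * (n.choose k : ℚ) * (1-q)^k * q^(n-k)
      = ∑ i ∈ Icc 1 n, (1/(i:ℚ)^r) *
          ∑ k ∈ Icc i n, (n.choose k : ℚ) * (1-q)^k * q^(n-k) := by
    have expand : ∀ k ∈ range (n+1),
        harmonic' r k * (n.choose k : ℚ) * (1-q)^k * q^(n-k)
          = ∑ i ∈ Icc 1 k, (1/(i:ℚ)^r) * ((n.choose k : ℚ) * (1-q)^k * q^(n-k)) := by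
      intro k hk
      rw [harmonic', Finset.sum_mul, Finset.sum_mul, Finset.sum_mul]
      exact Finset.sum_congr rfl fun i hi => by ring
    rw [Finset.sum_congr rfl expand]
    simp_rw [Finset.mul_sum]
    rw [Finset.sum_sigma', Finset.sum_sigma']
    refine Finset.sum_nbij' (fun x => ⟨x.2, x.1⟩) (fun x => ⟨x.2, x.1⟩)
      ?_ ?_ (fun _ _ => rfl) (fun _ _ => rfl) (fun _ _ => rfl) <;>
    · rintro ⟨a, b⟩ hm
      simp only [Finset.mem_sigma, Finset.mem_range, Finset.mem_Icc] at hm ⊢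
      omega
  rw [lhs1]
  -- Step 2: the tail binomial sum equals 1 minus partial sum
  have hfull : ∑ k ∈ range (n+1), (n.choose k : ℚ) * (1-q)^k * q^(n-k) = 1 := by
    have h1 : ((1-q) + q)^n = 1 := by norm_num
    rw [add_pow] at h1
    calc ∑ k ∈ range (n+1), (n.choose k : ℚ) * (1-q)^k * q^(n-k)
        = ∑ k ∈ range (n+1), (1-q)^k * q^(n-k) * (n.choose k : ℚ) :=
          Finset.sum_congr rfl fun k _ => by ring
      _ = 1 := h1
  have tail : ∀ i ∈ Icc 1 n, ∑ k ∈ Icc i n, (n.choose k : ℚ) * (1-q)^k * q^(n-k)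
      = 1 - ∑ k ∈ range i, (n.choose k : ℚ) * (1-q)^k * q^(n-k) := by
    intro i hi
    rw [Finset.mem_Icc] at hi
    have hsplit : ∑ k ∈ range i, (n.choose k : ℚ) * (1-q)^k * q^(n-k)
        + ∑ k ∈ Ico i (n+1), (n.choose k : ℚ) * (1-q)^k * q^(n-k)
        = ∑ k ∈ range (n+1), (n.choose k : ℚ) * (1-q)^k * q^(n-k) :=
      Finset.sum_range_add_sum_Ico _ (by omega)
    rw [hfull] at hsplit
    rw [← Finset.Ico_add_one_right_eq_Icc]
    linarith
  have step : ∑ i ∈ Icc 1 n, (1/(i:ℚ)^r) *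
        ∑ k ∈ Icc i n, (n.choose k : ℚ) * (1-q)^k * q^(n-k)
      = harmonic' r n - ∑ i ∈ Icc 1 n, (1/(i:ℚ)^r) *
          ∑ s ∈ range i,
            (-1:ℚ)^s * ((n-i+s).choose s) * (n.choose (n-i+1+s)) * q^(n-i+1+s) := by
    rw [harmonic', ← Finset.sum_sub_distrib]
    refine Finset.sum_congr rfl fun i hi => ?_
    rw [tail i hi]
    rw [Finset.mem_Icc] at hi
    rw [← partial_binom n i hi.1 hi.2 q]
    ring
  rw [step]
  congr 1
  have rhs1 : ∀ j ∈ Icc 1 n,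
      (∑ l ∈ range j, (-1:ℚ)^(j-l-1) * ((n-l-1).choose (n-j) : ℚ) *
          (n.choose l : ℚ) * (1/((n-l : ℕ):ℚ)^(r-1))) * q^j / (j:ℚ)
        = ∑ l ∈ range j, (-1:ℚ)^(j-l-1) * ((n-l-1).choose (n-j) : ℚ) *
          (n.choose l : ℚ) * (1/((n-l : ℕ):ℚ)^(r-1)) * q^j / (j:ℚ) := by
    intro j _
    rw [Finset.sum_mul, Finset.sum_div]
  rw [Finset.sum_congr rfl rhs1]
  simp_rw [Finset.mul_sum]
  rw [Finset.sum_sigma', Finset.sum_sigma']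
  refine Finset.sum_nbij' (fun x => ⟨n - x.1 + 1 + x.2, n - x.1⟩)
    (fun x => ⟨n - x.2, x.1 - x.2 - 1⟩) ?_ ?_ ?_ ?_ ?_
  · rintro ⟨i, s⟩ hm
    simp only [Finset.mem_sigma, Finset.mem_Icc, Finset.mem_range] at hm ⊢
    omega
  · rintro ⟨j, l⟩ hm
    simp only [Finset.mem_sigma, Finset.mem_Icc, Finset.mem_range] at hm ⊢
    omega
  · rintro ⟨i, s⟩ hm
    simp only [Finset.mem_sigma, Finset.mem_Icc, Finset.mem_range] at hm
    dsimp only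
    have e1 : n - (n - i) = i := by omega
    have e2 : n - i + 1 + s - (n - i) - 1 = s := by omega
    rw [e1, e2]
  · rintro ⟨j, l⟩ hm
    simp only [Finset.mem_sigma, Finset.mem_Icc, Finset.mem_range] at hm
    dsimp only
    have e1 : n - (n - l) + 1 + (j - l - 1) = j := by omega
    have e2 : n - (n - l) = l := by omega
    rw [e1, e2]
  · rintro ⟨i, s⟩ hm
    simp only [Finset.mem_sigma, Finset.mem_Icc, Finset.mem_range] at hm
    obtain ⟨⟨hi1, hi2⟩, hs⟩ := hm
    dsimp only
    have e1 : n - i + 1 + s - (n - i) - 1 = s := by omega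
    have e2 : n - (n - i) - 1 = i - 1 := by omega
    have e3 : n - (n - i + 1 + s) = i - 1 - s := by omega
    have e4 : n - (n - i) = i := by omega
    rw [e1, e2, e3, e4]
    have c1 : (i-1).choose (i-1-s) = (i-1).choose s := Nat.choose_symm (by omega)
    have c2 : n.choose (n-i) = n.choose i := Nat.choose_symm hi2
    rw [c1, c2]
    have hk := key_binom n i s hi1 hi2 hs
    have hi0 : (i:ℚ) ≠ 0 := Nat.cast_ne_zero.mpr (by omega)
    have hj0 : ((n - i + 1 + s : ℕ):ℚ) ≠ 0 := Nat.cast_ne_zero.mpr (by omega)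
    have hir : (i:ℚ)^r = (i:ℚ)^(r-1) * i := by
      conv_lhs => rw [show r = (r-1)+1 by omega]
      rw [pow_succ]
    have hir0 : ((i:ℚ))^(r-1) ≠ 0 := pow_ne_zero _ hi0
    rw [hir]
    generalize hg : n - i + 1 + s = J at hk hj0 ⊢
    field_simp
    linear_combination (q^J) * hk
end

section
/- Let n and j be positive integers with 1 ≤ j ≤ n. Then ∑_{l=0}^{j-1} (-1)^(j-l-1) · binomial(n-l-1, n-j) · binomial(n, l) = 1. -/
lemma U_vanish (n j : ℕ) (hj : 1 ≤ j) (hjn : j ≤ n) :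
    ∑ l ∈ Finset.range (j+1),
        (-1 : ℤ) ^ (j - l) * ((n - l).choose (n - j) : ℤ) * (n.choose l : ℤ) = 0 := by
  have h1 : ∀ l ∈ Finset.range (j+1),
      (-1 : ℤ) ^ (j - l) * ((n - l).choose (n - j) : ℤ) * (n.choose l : ℤ)
        = (n.choose j : ℤ) * ((-1 : ℤ) ^ (j - l) * (j.choose l : ℤ)) := by
    intro l hl
    rw [Finset.mem_range] at hl
    have hlj : l ≤ j := by omega
    have hsym : (n - l).choose (n - j) = (n - l).choose (j - l) := by
      have : (n - l) - (j - l) = n - j := by omega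
      rw [← this, Nat.choose_symm (by omega)]
    have hmul : n.choose j * j.choose l = n.choose l * (n - l).choose (j - l) :=
      Nat.choose_mul hlj
    have hc : ((n.choose j : ℤ)) * (j.choose l : ℤ) = (n.choose l : ℤ) * ((n - l).choose (j - l) : ℤ) := by
      exact_mod_cast hmul
    rw [hsym]
    linear_combination (-(-1 : ℤ) ^ (j - l)) * hc
  rw [Finset.sum_congr rfl h1, ← Finset.mul_sum]
  have h2 : ∑ l ∈ Finset.range (j+1), (-1 : ℤ) ^ (j - l) * (j.choose l : ℤ) = 0 := by
    have := Finset.sum_range_reflect (fun l => (-1 : ℤ) ^ l * (j.choose l : ℤ)) (j+1)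
    simp only [Nat.add_sub_cancel] at this
    calc ∑ l ∈ Finset.range (j+1), (-1 : ℤ) ^ (j - l) * (j.choose l : ℤ)
        = ∑ l ∈ Finset.range (j+1), (-1 : ℤ) ^ (j - l) * (j.choose (j - l) : ℤ) := by
          apply Finset.sum_congr rfl
          intro l hl
          rw [Finset.mem_range] at hl
          rw [Nat.choose_symm (by omega : l ≤ j)]
      _ = ∑ l ∈ Finset.range (j+1), (-1 : ℤ) ^ l * (j.choose l : ℤ) := this
      _ = 0 := Int.alternating_sum_range_choose_of_ne (by omega)
  rw [h2, mul_zero]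

theorem alternating_binomial_product_sum_eq_one (n j : ℕ) (hj : 1 ≤ j) (hjn : j ≤ n) :
    ∑ l ∈ Finset.range j,
        (-1 : ℤ) ^ (j - l - 1) * ((n - l - 1).choose (n - j) : ℤ) * (n.choose l : ℤ) = 1 := by
  revert hjn
  induction j, hj using Nat.le_induction with
  | base =>
    intro hn
    simp
  | succ j hj ih =>
    intro hn
    have hjn : j ≤ n := by omega
    have hjltn : j < n := by omega
    have step : ∀ l ∈ Finset.range (j+1),
        (-1 : ℤ) ^ (j + 1 - l - 1) * ((n - l - 1).choose (n - (j+1)) : ℤ) * (n.choose l : ℤ)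
          = (-1 : ℤ) ^ (j - l) * ((n - l).choose (n - j) : ℤ) * (n.choose l : ℤ)
            - (-1 : ℤ) ^ (j - l) * ((n - l - 1).choose (n - j) : ℤ) * (n.choose l : ℤ) := by
      intro l hl
      rw [Finset.mem_range] at hl
      have hlj : l ≤ j := by omega
      have hexp : j + 1 - l - 1 = j - l := by omega
      have hpascal : (n - l).choose (n - j)
          = (n - l - 1).choose (n - (j+1)) + (n - l - 1).choose (n - j) := by
        have e1 : n - l = (n - l - 1) + 1 := by omega
        have e2 : n - j = (n - (j+1)) + 1 := by omega
        rw [e1, e2, Nat.choose_succ_succ]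
        simp
      rw [hexp, hpascal]
      push_cast
      ring
    rw [Finset.sum_congr rfl step, Finset.sum_sub_distrib, U_vanish n j hj hjn, zero_sub,
      Finset.sum_range_succ]
    have hz : (n - j - 1).choose (n - j) = 0 := Nat.choose_eq_zero_of_lt (by omega)
    rw [hz]
    have hrest : ∀ l ∈ Finset.range j,
        (-1 : ℤ) ^ (j - l) * ((n - l - 1).choose (n - j) : ℤ) * (n.choose l : ℤ)
          = -((-1 : ℤ) ^ (j - l - 1) * ((n - l - 1).choose (n - j) : ℤ) * (n.choose l : ℤ)) := by
      intro l hl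
      rw [Finset.mem_range] at hl
      have hp : (-1 : ℤ) ^ (j - l) = -(-1 : ℤ) ^ (j - l - 1) := by
        have : j - l = (j - l - 1) + 1 := by omega
        conv_lhs => rw [this]
        rw [pow_succ]; ring
      rw [hp]; ring
    rw [Finset.sum_congr rfl hrest, Finset.sum_neg_distrib, ih hjn]
    simp
end

section
/- Let n and j be positive integers with 1 ≤ j ≤ n. Then ∑_{l=0}^{j-1} (-1)^(j-l-1) · binomial(n-l-1, n-j) · binomial(n, l) · 1/(n-l) = H_n − H_{n-j}, and this common value equals (1/(n)_j) · ∑_{ν=0}^{j-1} (-1)^(j-ν-1) · (ν+1) · s(j, ν+1) · n^ν, where s(j, k) is the unsigned Stirling number of the first kind. -/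
/-- The unsigned Stirling numbers of the first kind: `stirlingFirst j k` is the
coefficient of `x^k` in the ascending factorial `x (x+1) ⋯ (x+j-1)`; equivalently,
the falling factorial satisfies `(x)_j = ∑_{k=0}^j (-1)^(j-k) stirlingFirst j k * x^k`. -/
noncomputable def stirlingFirst (j k : ℕ) : ℕ := (ascPochhammer ℕ j).coeff k

namespace BSHDS
open Finset Polynomial

lemma keyB (m : ℕ) : ∀ x : ℚ, 0 < x →
    ∑ l ∈ range (m+1), (-1:ℚ)^l * (m.choose l : ℚ) / (x + l)^2
      = ((m.factorial : ℚ) / ∏ i ∈ range (m+1), (x + i)) * ∑ i ∈ range (m+1), 1/(x + i) := by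
  induction m with
  | zero => intro x hx; simp; ring
  | succ m ih =>
    intro x hx
    have hprodpos : ∀ y : ℚ, 0 < y → 0 < ∏ i ∈ range (m+1), (y + i) :=
      fun y hy => Finset.prod_pos (fun i _ => by positivity)
    have hstep : ∑ l ∈ range (m+2), (-1:ℚ)^l * ((m+1).choose l : ℚ) / (x + l)^2
        = (∑ l ∈ range (m+2), (-1:ℚ)^l * (m.choose l : ℚ) / (x + l)^2)
          - ∑ l ∈ range (m+1), (-1:ℚ)^l * (m.choose l : ℚ) / ((x+1) + l)^2 := by
      rw [Finset.sum_range_succ' _ (m+1), Finset.sum_range_succ' (fun l => (-1:ℚ)^l * (m.choose l : ℚ) / (x + l)^2) (m+1)]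
      have h1 : ∀ l ∈ range (m+1),
          (-1:ℚ)^(l+1) * (((m+1).choose (l+1)) : ℚ) / (x + ((l:ℚ)+1))^2
          = (-1:ℚ)^(l+1) * ((m.choose (l+1)) : ℚ) / (x + ((l:ℚ)+1))^2
            + (-((-1:ℚ)^l * ((m.choose l) : ℚ) / ((x+1) + l)^2)) := by
        intro l hl
        rw [Nat.choose_succ_succ]
        push_cast
        ring
      push_cast
      rw [Finset.sum_congr rfl h1, Finset.sum_add_distrib]
      simp only [Nat.choose_zero_right, Nat.cast_one, Finset.sum_neg_distrib]
      ring
    have htail : ∑ l ∈ range (m+2), (-1:ℚ)^l * (m.choose l : ℚ) / (x + l)^2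
        = ∑ l ∈ range (m+1), (-1:ℚ)^l * (m.choose l : ℚ) / (x + l)^2 := by
      rw [Finset.sum_range_succ]
      simp [Nat.choose_succ_self]
    rw [hstep, htail, ih x hx, ih (x+1) (by linarith)]
    have hP2 : ∏ i ∈ range (m+2), (x + i) = (∏ i ∈ range (m+1), (x + i)) * (x + (m+1)) := by
      rw [Finset.prod_range_succ]; push_cast; ring
    have hP1 : x * ∏ i ∈ range (m+1), ((x+1) + i) = ∏ i ∈ range (m+2), (x + i) := by
      rw [Finset.prod_range_succ' (fun i => (x + (i:ℕ))) (m+1)]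
      rw [Finset.prod_congr rfl (fun i (_ : i ∈ range (m+1)) =>
        show x + ((i:ℕ)+1 : ℕ) = (x+1) + (i:ℕ) by push_cast; ring)]
      push_cast
      ring
    have hS2 : ∑ i ∈ range (m+2), 1/(x + i) = (∑ i ∈ range (m+1), 1/(x + i)) + 1/(x + (m+1)) := by
      rw [Finset.sum_range_succ]; push_cast; ring
    have hS1 : ∑ i ∈ range (m+1), 1/((x+1) + i) = (∑ i ∈ range (m+2), 1/(x + i)) - 1/x := by
      rw [Finset.sum_range_succ' (fun i => 1/(x + i)) (m+1)]
      push_cast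
      have : ∀ i ∈ range (m+1), 1/((x+1) + (i:ℚ)) = 1/(x + ((i:ℚ)+1)) := fun i _ => by ring_nf
      rw [Finset.sum_congr rfl this]
      ring
    have hp := hprodpos x hx
    have hp' := hprodpos (x+1) (by linarith)
    have hM : (0:ℚ) < x + (m+1) := by positivity
    rw [hS1, hS2, hP2]
    have hfac : ((m+1).factorial : ℚ) = (m+1) * m.factorial := by
      rw [Nat.factorial_succ]; push_cast; ring
    have hp1' : ∏ i ∈ range (m+1), ((x+1) + i) = (∏ i ∈ range (m+1), (x + i)) * (x + (m+1)) / x := by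
      field_simp
      rw [hP1, hP2]
    rw [hp1', hfac]
    field_simp
    ring

lemma descFac_cast (n j : ℕ) (h : j ≤ n) :
    (n.descFactorial j : ℚ) = (n.factorial : ℚ) / ((n - j).factorial : ℚ) := by
  have := Nat.factorial_mul_descFactorial h
  have hne : ((n - j).factorial : ℚ) ≠ 0 := Nat.cast_ne_zero.mpr (Nat.factorial_ne_zero _)
  rw [eq_div_iff hne]
  exact_mod_cast (mul_comm ((n-j).factorial) (n.descFactorial j)) ▸ this

lemma bridge (n j l : ℕ) (hl : l < j) (hjn : j ≤ n) :
    ((n - l - 1).choose (n - j) : ℚ) * (n.choose l : ℚ) * (1 / ((n - l : ℕ) : ℚ))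
      = (n.descFactorial j : ℚ) / ((j-1).factorial : ℚ) * ((j-1).choose l : ℚ) / ((n:ℚ) - l)^2 := by
  have hln : l < n := lt_of_lt_of_le hl hjn
  have h1 : n - j ≤ n - l - 1 := by omega
  have h2 : l ≤ n := hln.le
  have h3 : l ≤ j - 1 := by omega
  rw [Nat.cast_choose ℚ h1, Nat.cast_choose ℚ h2, Nat.cast_choose ℚ h3, descFac_cast n j hjn]
  have e1 : n - l - 1 - (n - j) = j - l - 1 := by omega
  have e2 : j - 1 - l = j - l - 1 := by omega
  rw [e1, e2]
  have e3 : (n - l : ℕ) = (n - l - 1) + 1 := by omega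
  have e4 : ((n - l : ℕ) : ℚ) = (n : ℚ) - l := by push_cast [Nat.cast_sub h2]; ring
  have e5 : ((n - l).factorial : ℚ) = ((n:ℚ) - l) * ((n - l - 1).factorial : ℚ) := by
    rw [e3, Nat.factorial_succ, ← e3]
    push_cast [e4]
    ring
  rw [e5, e4]
  have hne : ∀ k : ℕ, ((k.factorial : ℚ)) ≠ 0 := fun k => Nat.cast_ne_zero.mpr (Nat.factorial_ne_zero _)
  have hnl : ((n : ℚ) - l) ≠ 0 := by
    have : (l:ℚ) < n := by exact_mod_cast hln
    linarith
  field_simp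

lemma descFac_prod (n j : ℕ) (h : j ≤ n) :
    (n.descFactorial j : ℚ) = ∏ i ∈ range j, ((n:ℚ) - i) := by
  rw [Nat.descFactorial_eq_prod_range, Nat.cast_prod]
  exact Finset.prod_congr rfl fun i hi => by
    have : i ≤ n := by have := mem_range.mp hi; omega
    push_cast [Nat.cast_sub this]; ring

lemma central (n j : ℕ) (hj : 1 ≤ j) (hjn : j ≤ n) :
    ∑ l ∈ range j, (-1:ℚ)^(j-l-1) * ((n-l-1).choose (n-j) : ℚ) * (n.choose l : ℚ) * (1/((n-l:ℕ):ℚ))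
      = ∑ i ∈ range j, 1/(((n-j+1+i : ℕ)) : ℚ) := by
  obtain ⟨m, rfl⟩ : ∃ m, j = m + 1 := ⟨j-1, (Nat.succ_pred_eq_of_pos hj).symm⟩
  have hmn : m < n := hjn
  set x : ℚ := ((n - m : ℕ) : ℚ) with hxdef
  have hxval : x = (n:ℚ) - m := by
    rw [hxdef]; push_cast [Nat.cast_sub hmn.le]; ring
  have hx : 0 < x := by
    rw [hxval]
    have : (m:ℚ) < n := by exact_mod_cast hmn
    linarith
  set D : ℚ := (n.descFactorial (m+1) : ℚ) with hDdef
  have step1 : ∑ l ∈ range (m+1), (-1:ℚ)^(m+1-l-1) * ((n-l-1).choose (n-(m+1)) : ℚ) * (n.choose l : ℚ) * (1/((n-l:ℕ):ℚ))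
      = D / (m.factorial : ℚ) * ∑ l ∈ range (m+1), (-1:ℚ)^(m-l) * ((m.choose l : ℚ) / ((n:ℚ) - l)^2) := by
    rw [Finset.mul_sum]
    refine Finset.sum_congr rfl fun l hl => ?_
    have hlm : l < m + 1 := mem_range.mp hl
    have e : m + 1 - l - 1 = m - l := by omega
    have hb := bridge n (m+1) l hlm hjn
    simp only [Nat.add_sub_cancel] at hb
    rw [e]
    linear_combination ((-1:ℚ)^(m-l)) * hb
  have step2 : ∑ l ∈ range (m+1), (-1:ℚ)^(m-l) * ((m.choose l : ℚ) / ((n:ℚ) - l)^2)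
      = ∑ l ∈ range (m+1), (-1:ℚ)^l * (m.choose l : ℚ) / (x + l)^2 := by
    rw [← Finset.sum_range_reflect (fun l => (-1:ℚ)^l * (m.choose l : ℚ) / (x + l)^2) (m+1)]
    refine Finset.sum_congr rfl fun l hl => ?_
    have hlm : l ≤ m := by have := mem_range.mp hl; omega
    have e1 : m + 1 - 1 - l = m - l := by omega
    rw [e1, Nat.choose_symm hlm]
    have e2 : x + ((m - l : ℕ) : ℚ) = (n:ℚ) - l := by
      rw [hxval]; push_cast [Nat.cast_sub hlm]; ring
    rw [e2]
    ring
  have step3 := keyB m x hx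
  have step4 : ∏ i ∈ range (m+1), (x + i) = D := by
    rw [hDdef, descFac_prod n (m+1) hjn,
      ← Finset.prod_range_reflect (fun i => x + (i:ℚ)) (m+1)]
    refine Finset.prod_congr rfl fun i hi => ?_
    have him : i ≤ m := by have := mem_range.mp hi; omega
    have e1 : m + 1 - 1 - i = m - i := by omega
    rw [e1, hxval]
    push_cast [Nat.cast_sub him]
    ring
  have hD : D ≠ 0 := by
    rw [hDdef]
    have hnz : n.descFactorial (m+1) ≠ 0 := by
      intro h
      have := Nat.descFactorial_eq_zero_iff_lt.mp h
      omega
    exact_mod_cast hnz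
  have hfac : (m.factorial : ℚ) ≠ 0 := Nat.cast_ne_zero.mpr (Nat.factorial_ne_zero _)
  rw [step1, step2, step3, step4]
  have hgen : ∀ S : ℚ, D / (m.factorial:ℚ) * ((m.factorial:ℚ) / D * S) = S := by
    intro S; field_simp
  rw [hgen]
  refine Finset.sum_congr rfl fun i hi => ?_
  congr 1
  have him : i ≤ m := by have := mem_range.mp hi; omega
  rw [hxval]
  push_cast [Nat.cast_sub hjn]
  ring

lemma harm_diff (n j : ℕ) (hjn : j ≤ n) :
    harmonic' 1 n - harmonic' 1 (n - j) = ∑ i ∈ range j, 1/(((n-j+1+i : ℕ)) : ℚ) := by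
  unfold harmonic'
  simp only [pow_one]
  have h1 : Finset.Icc 1 n = Finset.Ico 1 (n+1) := by rw [Finset.Ico_add_one_right_eq_Icc]
  have h2 : Finset.Icc 1 (n-j) = Finset.Ico 1 (n-j+1) := by rw [Finset.Ico_add_one_right_eq_Icc]
  rw [h1, h2]
  have hcons := Finset.sum_Ico_consecutive (fun i => 1/(i:ℚ)) (by omega : 1 ≤ n-j+1) (by omega : n-j+1 ≤ n+1)
  rw [← hcons, add_sub_cancel_left, Finset.sum_Ico_eq_sum_range]
  have e : n + 1 - (n - j + 1) = j := by omega
  rw [e]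

noncomputable def Pp (j : ℕ) : Polynomial ℚ := ∏ i ∈ range j, (X - C (i:ℚ))

lemma Pp_eval (n j : ℕ) : (Pp j).eval (n:ℚ) = ∏ i ∈ range j, ((n:ℚ) - i) := by
  simp [Pp, eval_prod]

lemma Pp_deriv_eval (n : ℕ) : ∀ j, j ≤ n → (Polynomial.derivative (Pp j)).eval (n:ℚ)
    = ((Pp j).eval (n:ℚ)) * ∑ i ∈ range j, 1/((n:ℚ) - i) := by
  intro j
  induction j with
  | zero => intro _; simp [Pp]
  | succ j ih =>
    intro hjn
    have hjn' : j ≤ n := by omega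
    have hnj : ((n:ℚ) - j) ≠ 0 := by
      have : (j:ℚ) < n := by exact_mod_cast (show j < n by omega)
      linarith
    have hPp : Pp (j+1) = Pp j * (X - C (j:ℚ)) := by
      rw [Pp, Pp, prod_range_succ]
    rw [hPp, derivative_mul, eval_add, eval_mul, eval_mul, ih hjn']
    simp only [derivative_sub, derivative_X, derivative_C, sub_zero, eval_one, mul_one,
      eval_sub, eval_X, eval_C]
    rw [Finset.sum_range_succ]
    field_simp
    simp only [eval_sub, eval_mul, eval_X, eval_C]
    ring

lemma Pp_eq (j : ℕ) : Pp j = Polynomial.C ((-1:ℚ)^j) * (ascPochhammer ℚ j).comp (-X) := by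
  induction j with
  | zero => simp [Pp]
  | succ j ih =>
    have hPp : Pp (j+1) = Pp j * (X - C (j:ℚ)) := by rw [Pp, Pp, prod_range_succ]
    rw [hPp, ih, ascPochhammer_succ_right, mul_comp, add_comp, X_comp, natCast_comp,
      pow_succ, map_mul]
    simp only [map_neg, map_one, Polynomial.C_eq_natCast]
    ring

lemma derivPp (j n : ℕ) :
    (Polynomial.derivative (Pp j)).eval (n:ℚ)
      = (-1:ℚ)^(j+1) * (Polynomial.derivative (ascPochhammer ℚ j)).eval (-(n:ℚ)) := by
  rw [Pp_eq, derivative_mul, derivative_C, zero_mul, zero_add, derivative_comp]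
  simp only [derivative_neg, derivative_X, eval_mul, eval_C, eval_neg, eval_one, eval_comp,
    eval_X, mul_comm]
  rw [pow_succ]
  ring

lemma stirling_eval (j n : ℕ) (hj : 1 ≤ j) :
    ∑ ν ∈ range j, (-1:ℚ)^(j-ν-1) * ((ν:ℚ)+1) * (stirlingFirst j (ν+1) : ℚ) * (n:ℚ)^ν
      = (Polynomial.derivative (Pp j)).eval (n:ℚ) := by
  rw [derivPp j n]
  have hdeg : (Polynomial.derivative (ascPochhammer ℚ j)).natDegree < j := by
    have h1 : (ascPochhammer ℚ j).natDegree = j := ascPochhammer_natDegree ℚ j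
    have := Polynomial.natDegree_derivative_lt (p := ascPochhammer ℚ j) (by rw [h1]; omega)
    omega
  rw [Polynomial.eval_eq_sum_range' hdeg]
  rw [Finset.mul_sum]
  refine Finset.sum_congr rfl fun ν hν => ?_
  have hνj : ν < j := mem_range.mp hν
  rw [Polynomial.coeff_derivative]
  have hcoeff : (ascPochhammer ℚ j).coeff (ν+1) = (stirlingFirst j (ν+1) : ℚ) := by
    rw [← ascPochhammer_map (Nat.castRingHom ℚ), Polynomial.coeff_map, stirlingFirst]
    rfl
  rw [hcoeff]
  have hpar : (j+1+ν) % 2 = (j-ν-1) % 2 := by omega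
  have hsign : (-1:ℚ)^(j+1) * (-1:ℚ)^ν = (-1:ℚ)^(j-ν-1) := by
    rw [← pow_add, neg_one_pow_eq_pow_mod_two, hpar, ← neg_one_pow_eq_pow_mod_two]
  rw [neg_eq_neg_one_mul (n:ℚ), mul_pow, ← hsign]
  ring

end BSHDS

theorem binomial_sum_harmonic_diff_and_stirling (n j : ℕ) (hj : 1 ≤ j) (hjn : j ≤ n) :
    (∑ l ∈ Finset.range j,
        (-1 : ℚ) ^ (j - l - 1) * ((n - l - 1).choose (n - j) : ℚ) * (n.choose l : ℚ) *
          (1 / ((n - l : ℕ) : ℚ)) =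
      harmonic' 1 n - harmonic' 1 (n - j)) ∧
    (∑ l ∈ Finset.range j,
        (-1 : ℚ) ^ (j - l - 1) * ((n - l - 1).choose (n - j) : ℚ) * (n.choose l : ℚ) *
          (1 / ((n - l : ℕ) : ℚ)) =
      (1 / (n.descFactorial j : ℚ)) *
        ∑ ν ∈ Finset.range j,
          (-1 : ℚ) ^ (j - ν - 1) * (ν + 1 : ℚ) * (stirlingFirst j (ν + 1) : ℚ) * (n : ℚ) ^ ν) := by
  open Finset BSHDS in
  have hpart1 : ∑ l ∈ Finset.range j,
        (-1 : ℚ) ^ (j - l - 1) * ((n - l - 1).choose (n - j) : ℚ) * (n.choose l : ℚ) *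
          (1 / ((n - l : ℕ) : ℚ)) = harmonic' 1 n - harmonic' 1 (n - j) := by
    rw [BSHDS.central n j hj hjn, BSHDS.harm_diff n j hjn]
  refine ⟨hpart1, ?_⟩
  rw [hpart1, BSHDS.harm_diff n j hjn]
  -- part 2
  have hD : (n.descFactorial j : ℚ) ≠ 0 := by
    have hnz : n.descFactorial j ≠ 0 := by
      intro h
      have := Nat.descFactorial_eq_zero_iff_lt.mp h
      omega
    exact_mod_cast hnz
  have hsum : ∑ ν ∈ Finset.range j,
      (-1 : ℚ) ^ (j - ν - 1) * (ν + 1 : ℚ) * (stirlingFirst j (ν + 1) : ℚ) * (n : ℚ) ^ ν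
      = (n.descFactorial j : ℚ) * ∑ i ∈ Finset.range j, 1/((n:ℚ) - i) := by
    have h1 := BSHDS.stirling_eval j n hj
    have h2 := BSHDS.Pp_deriv_eval n j hjn
    have h3 : (BSHDS.Pp j).eval (n:ℚ) = (n.descFactorial j : ℚ) := by
      rw [BSHDS.Pp_eval, ← BSHDS.descFac_prod n j hjn]
    rw [← h3, ← h2, ← h1]
  rw [hsum, ← mul_assoc, one_div, inv_mul_cancel₀ hD, one_mul]
  -- final: ∑ 1/((n:ℚ)-i) = ∑ 1/((n-j+1+i : ℕ):ℚ)
  rw [← Finset.sum_range_reflect (fun i => 1/(((n-j+1+i : ℕ)) : ℚ)) j]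
  refine Finset.sum_congr rfl fun i hi => ?_
  have hij : i < j := Finset.mem_range.mp hi
  have e : n - j + 1 + (j - 1 - i) = n - i := by omega
  have hin : i ≤ n := by omega
  rw [e, Nat.cast_sub hin]
end

section
/- Let n be a positive integer and q a rational number. Then ∑_{k=0}^{n} H_k^{(2)} · binomial(n, k) · (1-q)^k · q^(n-k) = H_n^{(2)} − ∑_{j=1}^{n} (H_n − H_{n-j}) · q^j / j. -/
lemma harmonic'_succ (r k : ℕ) :
    harmonic' r (k + 1) = harmonic' r k + 1 / ((k : ℚ) + 1) ^ r := by
  unfold harmonic'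
  rw [Finset.sum_Icc_succ_top (by omega)]
  push_cast
  ring

lemma harmonic'_zero (r : ℕ) : harmonic' r 0 = 0 := by simp [harmonic']

lemma icc_sum_eq_range (N : ℕ) (f : ℕ → ℚ) :
    ∑ m ∈ Finset.Icc 1 N, f m = ∑ i ∈ Finset.range N, f (i + 1) := by
  rw [show Finset.Icc 1 N = Finset.Ico 1 (N+1) from (Finset.Ico_add_one_right_eq_Icc 1 N).symm,
    Finset.sum_Ico_eq_sum_range]
  simp [add_comm]

-- reflection
lemma reflect (n : ℕ) (q : ℚ) :
    ∑ i ∈ Finset.range n, q ^ (n - i) / ((i : ℚ) + 1)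
      = ∑ i ∈ Finset.range n, q ^ (i + 1) / ((n - i : ℕ) : ℚ) := by
  rw [← Finset.sum_range_reflect]
  refine Finset.sum_congr rfl (fun i hi => ?_)
  have hi' : i < n := Finset.mem_range.mp hi
  rw [show n - (n - 1 - i) = i + 1 by omega,
    show ((n - 1 - i : ℕ) : ℚ) + 1 = ((n - i : ℕ) : ℚ) by
      exact_mod_cast congrArg (Nat.cast (R := ℚ)) (by omega : (n - 1 - i) + 1 = n - i)]

lemma harmonic1_range (N : ℕ) :
    harmonic' 1 N = ∑ i ∈ Finset.range N, 1 / ((i : ℚ) + 1) := by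
  unfold harmonic'
  rw [icc_sum_eq_range]
  push_cast
  simp


lemma binom_one (N : ℕ) (q : ℚ) :
    ∑ m ∈ Finset.range (N + 1), (N.choose m : ℚ) * (1 - q) ^ m * q ^ (N - m) = 1 := by
  have h := add_pow (1 - q) q N
  simp only [sub_add_cancel, one_pow] at h
  refine Eq.trans ?_ h.symm
  exact Finset.sum_congr rfl (fun m _ => by ring)

lemma binom_one' (N : ℕ) (q : ℚ) :
    ∑ m ∈ Finset.Icc 1 N, (N.choose m : ℚ) * (1 - q) ^ m * q ^ (N - m) = 1 - q ^ N := by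
  have h := binom_one N q
  rw [Finset.sum_range_succ'] at h
  simp only [Nat.choose_zero_right, Nat.cast_one, one_mul, pow_zero, Nat.sub_zero] at h
  rw [icc_sum_eq_range]
  linarith

lemma succ_mul_choose_q (N i : ℕ) :
    ((N : ℚ) + 1) * (N.choose i : ℚ) = ((N+1).choose (i+1) : ℚ) * ((i : ℚ) + 1) := by
  exact_mod_cast congrArg (Nat.cast (R := ℚ)) (Nat.add_one_mul_choose_eq N i)

lemma keyA (N : ℕ) (q : ℚ) :
    ∑ m ∈ Finset.Icc 1 N, (N.choose m : ℚ) * (1 - q) ^ m * q ^ (N - m) / m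
      = ∑ j ∈ Finset.Icc 1 N, (q ^ (N - j) - q ^ N) / j := by
  induction N with
  | zero => simp
  | succ N IH =>
    rw [icc_sum_eq_range, icc_sum_eq_range] at IH ⊢
    simp only [Nat.succ_sub_succ] at *
    push_cast at IH ⊢
    have step1 : ∑ i ∈ Finset.range (N+1),
        ((N+1).choose (i+1) : ℚ) * (1 - q) ^ (i+1) * q ^ (N - i) / ((i : ℚ)+1)
        = (∑ i ∈ Finset.range (N+1), (N.choose (i+1) : ℚ) * (1 - q) ^ (i+1) * q ^ (N - i) / ((i : ℚ)+1))
          + ∑ i ∈ Finset.range (N+1), (N.choose i : ℚ) * (1 - q) ^ (i+1) * q ^ (N - i) / ((i : ℚ)+1) := by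
      rw [← Finset.sum_add_distrib]
      refine Finset.sum_congr rfl (fun i _ => ?_)
      rw [Nat.choose_succ_succ' N i]
      push_cast
      ring
    have hA : ∑ i ∈ Finset.range (N+1), (N.choose (i+1) : ℚ) * (1 - q) ^ (i+1) * q ^ (N - i) / ((i : ℚ)+1)
        = q * ∑ i ∈ Finset.range N, (N.choose (i+1) : ℚ) * (1 - q) ^ (i+1) * q ^ (N - (i+1)) / ((i : ℚ)+1) := by
      rw [Finset.sum_range_succ, Finset.mul_sum]
      have htop : (N.choose (N+1) : ℚ) * (1 - q) ^ (N+1) * q ^ (N - N) / ((N : ℚ)+1) = 0 := by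
        simp
      rw [htop, add_zero]
      refine Finset.sum_congr rfl (fun i hi => ?_)
      have hi' : i < N := Finset.mem_range.mp hi
      rw [show N - i = (N - (i+1)) + 1 by omega, pow_succ]
      ring
    have hB : ∑ i ∈ Finset.range (N+1), (N.choose i : ℚ) * (1 - q) ^ (i+1) * q ^ (N - i) / ((i : ℚ)+1)
        = (1 - q ^ (N+1)) / ((N : ℚ)+1) := by
      have h1 : ∀ i ∈ Finset.range (N+1),
          (N.choose i : ℚ) * (1 - q) ^ (i+1) * q ^ (N - i) / ((i : ℚ)+1)
          = ((N+1).choose (i+1) : ℚ) * (1 - q) ^ (i+1) * q ^ (N - i) / ((N : ℚ)+1) := by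
        intro i _
        rw [div_eq_div_iff (by positivity) (by positivity)]
        linear_combination (1 - q) ^ (i+1) * q ^ (N - i) * succ_mul_choose_q N i
      rw [Finset.sum_congr rfl h1, ← Finset.sum_div]
      have h3 := binom_one' (N+1) q
      rw [icc_sum_eq_range] at h3
      simp only [Nat.succ_sub_succ] at h3
      rw [h3]
    rw [step1, hA, hB, IH, Finset.mul_sum]
    have hterm : ∀ i ∈ Finset.range N,
        q * ((q ^ (N - (i+1)) - q ^ N) / ((i : ℚ)+1)) = (q ^ (N - i) - q ^ (N+1)) / ((i : ℚ)+1) := by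
      intro i hi
      have hi' : i < N := Finset.mem_range.mp hi
      rw [show N - i = (N - (i+1)) + 1 by omega, pow_succ, pow_succ]
      ring
    rw [Finset.sum_congr rfl hterm, Finset.sum_range_succ, Nat.sub_self, pow_zero]

lemma main_all (n : ℕ) (q : ℚ) :
    ∑ k ∈ Finset.range (n + 1), harmonic' 2 k * (n.choose k : ℚ) * (1 - q) ^ k * q ^ (n - k)
      = harmonic' 2 n -
        ∑ j ∈ Finset.Icc 1 n, (harmonic' 1 n - harmonic' 1 (n - j)) * q ^ j / (j : ℚ) := by
  induction n with
  | zero => simp [harmonic']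
  | succ n IH =>
    -- Step A: decompose the LHS
    have hL : ∑ k ∈ Finset.range (n + 1 + 1),
          harmonic' 2 k * ((n+1).choose k : ℚ) * (1 - q) ^ k * q ^ (n + 1 - k)
        = (∑ k ∈ Finset.range (n + 1), harmonic' 2 k * (n.choose k : ℚ) * (1 - q) ^ k * q ^ (n - k))
          + ∑ i ∈ Finset.range (n + 1), (n.choose i : ℚ) * (1 - q) ^ (i+1) * q ^ (n - i) / ((i : ℚ) + 1) ^ 2 := by
      rw [Finset.sum_range_succ']
      simp only [harmonic'_zero, zero_mul, add_zero, Nat.succ_sub_succ]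
      have split : ∀ i ∈ Finset.range (n+1),
          harmonic' 2 (i+1) * ((n+1).choose (i+1) : ℚ) * (1 - q) ^ (i+1) * q ^ (n - i)
          = harmonic' 2 (i+1) * (n.choose (i+1) : ℚ) * (1 - q) ^ (i+1) * q ^ (n - i)
            + harmonic' 2 i * (n.choose i : ℚ) * (1 - q) ^ (i+1) * q ^ (n - i)
            + (n.choose i : ℚ) * (1 - q) ^ (i+1) * q ^ (n - i) / ((i : ℚ) + 1) ^ 2 := by
        intro i _
        rw [Nat.choose_succ_succ' n i, harmonic'_succ]
        push_cast
        field_simp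
        ring
      rw [Finset.sum_congr rfl split, Finset.sum_add_distrib, Finset.sum_add_distrib]
      congr 1
      have hA : ∑ i ∈ Finset.range (n+1),
          harmonic' 2 (i+1) * (n.choose (i+1) : ℚ) * (1 - q) ^ (i+1) * q ^ (n - i)
          = q * ∑ i ∈ Finset.range n,
              harmonic' 2 (i+1) * (n.choose (i+1) : ℚ) * (1 - q) ^ (i+1) * q ^ (n - (i+1)) := by
        rw [Finset.sum_range_succ, Finset.mul_sum]
        have htop : harmonic' 2 (n+1) * (n.choose (n+1) : ℚ) * (1 - q) ^ (n+1) * q ^ (n - n) = 0 := by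
          simp
        rw [htop, add_zero]
        refine Finset.sum_congr rfl (fun i hi => ?_)
        have hi' : i < n := Finset.mem_range.mp hi
        rw [show n - i = (n - (i+1)) + 1 by omega, pow_succ]
        ring
      have hLn : ∑ k ∈ Finset.range (n + 1), harmonic' 2 k * (n.choose k : ℚ) * (1 - q) ^ k * q ^ (n - k)
          = ∑ i ∈ Finset.range n, harmonic' 2 (i+1) * (n.choose (i+1) : ℚ) * (1 - q) ^ (i+1) * q ^ (n - (i+1)) := by
        rw [Finset.sum_range_succ']
        simp [harmonic'_zero]
      have hB : ∑ i ∈ Finset.range (n+1),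
          harmonic' 2 i * (n.choose i : ℚ) * (1 - q) ^ (i+1) * q ^ (n - i)
          = (1 - q) * ∑ k ∈ Finset.range (n + 1),
              harmonic' 2 k * (n.choose k : ℚ) * (1 - q) ^ k * q ^ (n - k) := by
        rw [Finset.mul_sum]
        exact Finset.sum_congr rfl (fun i _ => by ring)
      rw [hA, ← hLn, hB]
      ring
    rw [hL, IH]
    -- Step B: the correction sum via keyA
    have key := keyA (n+1) q
    rw [icc_sum_eq_range, icc_sum_eq_range] at key
    simp only [Nat.succ_sub_succ] at key
    push_cast at key
    have hS3 : ∑ i ∈ Finset.range (n + 1), (n.choose i : ℚ) * (1 - q) ^ (i+1) * q ^ (n - i) / ((i : ℚ) + 1) ^ 2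
        = (∑ i ∈ Finset.range (n+1), (q ^ (n - i) - q ^ (n+1)) / ((i : ℚ) + 1)) / ((n : ℚ) + 1) := by
      have h1 : ∀ i ∈ Finset.range (n+1),
          (n.choose i : ℚ) * (1 - q) ^ (i+1) * q ^ (n - i) / ((i : ℚ) + 1) ^ 2
          = ((n+1).choose (i+1) : ℚ) * (1 - q) ^ (i+1) * q ^ (n - i) / ((i : ℚ)+1) / ((n : ℚ) + 1) := by
        intro i _
        rw [div_div, div_eq_div_iff (by positivity) (by positivity)]
        linear_combination (1 - q) ^ (i+1) * q ^ (n - i) * ((i : ℚ) + 1) * succ_mul_choose_q n i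
      rw [Finset.sum_congr rfl h1, ← Finset.sum_div, key]
    rw [hS3]
    -- Step C: match with the RHS at n+1
    rw [harmonic'_succ 2 n, Finset.sum_Icc_succ_top (show 1 ≤ n+1 by omega)]
    rw [show n + 1 - (n + 1) = 0 from Nat.sub_self (n+1), harmonic'_zero, sub_zero]
    have hsplit : ∀ j ∈ Finset.Icc 1 n,
        (harmonic' 1 (n+1) - harmonic' 1 (n+1-j)) * q ^ j / (j : ℚ)
        = (harmonic' 1 n - harmonic' 1 (n-j)) * q ^ j / (j : ℚ)
          - q ^ j / ((((n-j : ℕ) : ℚ) + 1) * ((n : ℚ) + 1)) := by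
      intro j hj
      obtain ⟨hj1, hj2⟩ := Finset.mem_Icc.mp hj
      have hcast : ((n - j : ℕ) : ℚ) = (n : ℚ) - (j : ℚ) := Nat.cast_sub hj2
      rw [show n + 1 - j = (n - j) + 1 by omega, harmonic'_succ 1 n, harmonic'_succ 1 (n-j),
        pow_one, pow_one, hcast]
      have hj0 : (j : ℚ) ≠ 0 := by
        have : 0 < j := hj1
        positivity
      have ha : ((n : ℚ) + 1) ≠ 0 := by positivity
      have hb : ((n : ℚ) - (j : ℚ) + 1) ≠ 0 := by rw [← hcast]; positivity
      field_simp
      ring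
    rw [Finset.sum_congr rfl hsplit, Finset.sum_sub_distrib]
    -- simplify the new LHS sum
    have e1 : ∑ i ∈ Finset.range (n+1), (q ^ (n - i) - q ^ (n+1)) / ((i : ℚ) + 1)
        = (∑ i ∈ Finset.range (n+1), q ^ (n - i) / ((i : ℚ) + 1))
          - q ^ (n+1) * harmonic' 1 (n+1) := by
      rw [harmonic1_range, Finset.mul_sum, ← Finset.sum_sub_distrib]
      exact Finset.sum_congr rfl (fun i _ => by ring)
    have e2 : ∑ i ∈ Finset.range (n+1), q ^ (n - i) / ((i : ℚ) + 1)
        = (∑ j ∈ Finset.Icc 1 n, q ^ j / (((n-j : ℕ) : ℚ) + 1)) + 1 / ((n : ℚ) + 1) := by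
      rw [Finset.sum_range_succ, Nat.sub_self, pow_zero]
      congr 1
      rw [reflect, icc_sum_eq_range]
      refine Finset.sum_congr rfl (fun i hi => ?_)
      have hi' : i < n := Finset.mem_range.mp hi
      rw [show ((n - (i+1) : ℕ) : ℚ) + 1 = ((n - i : ℕ) : ℚ) by
        exact_mod_cast congrArg (Nat.cast (R := ℚ)) (by omega : (n - (i+1)) + 1 = n - i)]
    have e3 : ∑ j ∈ Finset.Icc 1 n, q ^ j / ((((n-j : ℕ) : ℚ) + 1) * ((n : ℚ) + 1))
        = (∑ j ∈ Finset.Icc 1 n, q ^ j / (((n-j : ℕ) : ℚ) + 1)) / ((n : ℚ) + 1) := by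
      rw [Finset.sum_div]
      exact Finset.sum_congr rfl (fun j _ => by rw [div_div])
    rw [e1, e2, e3]
    have ha : ((n : ℚ) + 1) ≠ 0 := by positivity
    field_simp
    push_cast
    ring

theorem binomial_sum_second_order_harmonic (n : ℕ) (hn : 0 < n) (q : ℚ) :
    ∑ k ∈ Finset.range (n + 1),
        harmonic' 2 k * (n.choose k : ℚ) * (1 - q) ^ k * q ^ (n - k) =
      harmonic' 2 n -
        ∑ j ∈ Finset.Icc 1 n,
          (harmonic' 1 n - harmonic' 1 (n - j)) * q ^ j / (j : ℚ) :=
  main_all n q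
end
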